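/- arXiv:2302.06689 — 3 statements merged into one kernel-verified Lean document; each statement's English description precedes it below -/
import Mathlib

section
/- Let V : ℝ² → ℝ be nonnegative, measurable and bounded with ∫_{ℝ²} V(x) dx = 1, let s > 0, n ≥ 1 an integer, and x₀ ∈ ℝ². Then, with the convention s₀ = 0, ∫_{0 < s₁ < ⋯ < s_n < s} ∫_{(ℝ²)^n} ∏_{i=1}^{n} V(√2·x_i) ρ_{s_i − s_{i−1}}(x_{i−1} − x_i) dx₁⋯dx_n ds₁⋯ds_n ≤ ( ∫_0^s min(1/(4πr), ‖V‖_∞) dr )^n. -/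
open MeasureTheory Real

/-- The two-dimensional heat kernel `ρ_t(x) = (2πt)⁻¹ exp(−|x|²/(2t))`. -/
noncomputable def heatK (t : ℝ) (x : EuclideanSpace ℝ (Fin 2)) : ℝ :=
  (2 * π * t)⁻¹ * Real.exp (-‖x‖ ^ 2 / (2 * t))

section aux

abbrev E2 := EuclideanSpace ℝ (Fin 2)

lemma heatK_nonneg {t : ℝ} (ht : 0 < t) (x : E2) : 0 ≤ heatK t x := by
  unfold heatK
  have := Real.pi_pos
  positivity

lemma heatK_le {t : ℝ} (ht : 0 < t) (x : E2) : heatK t x ≤ (2 * π * t)⁻¹ := by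
  unfold heatK
  have h1 : Real.exp (-‖x‖ ^ 2 / (2 * t)) ≤ 1 := by
    rw [Real.exp_le_one_iff]
    apply div_nonpos_of_nonpos_of_nonneg (neg_nonpos.mpr (by positivity)) (by positivity)
  have h2 : (0:ℝ) < (2 * π * t)⁻¹ := by
    have := Real.pi_pos; positivity
  nlinarith

lemma heatK_meas (t : ℝ) : Measurable fun x : E2 => heatK t x := by
  unfold heatK
  exact measurable_const.mul
    (Real.measurable_exp.comp (((measurable_norm.pow_const 2).neg).div_const (2 * t)))

lemma heatK_exp_eq {t : ℝ} (x : E2) :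
    Real.exp (-‖x‖ ^ 2 / (2 * t)) = Real.exp (-(2*t)⁻¹ * ‖x‖ ^ 2) := by
  congr 1; ring

lemma integral_heatK {t : ℝ} (ht : 0 < t) : ∫ x : E2, heatK t x = 1 := by
  have hb : (0:ℝ) < (2*t)⁻¹ := by positivity
  have hπ := Real.pi_pos
  unfold heatK
  simp_rw [heatK_exp_eq]
  rw [MeasureTheory.integral_const_mul, GaussianFourier.integral_rexp_neg_mul_sq_norm hb]
  have hfr : ((Module.finrank ℝ E2 : ℝ) / 2) = 1 := by
    rw [finrank_euclideanSpace_fin]; norm_num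
  rw [hfr, Real.rpow_one]
  field_simp

lemma integrable_heatK {t : ℝ} (ht : 0 < t) : Integrable (fun x : E2 => heatK t x) := by
  have hb : (0:ℝ) < (2*t)⁻¹ := by positivity
  have h := (GaussianFourier.integrable_cexp_neg_mul_sq_norm_add (V := E2)
      (b := ((2*t)⁻¹ : ℂ)) (by simpa using hb) 0 0).norm
  have h2 : Integrable (fun x : E2 => Real.exp (-(2*t)⁻¹ * ‖x‖ ^ 2)) := by
    apply h.congr
    filter_upwards with v
    rw [Complex.norm_exp]
    congr 1
    simp only [zero_mul, add_zero]
    norm_cast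
  unfold heatK
  simp_rw [heatK_exp_eq]
  exact h2.const_mul _

lemma lint_heatK {t : ℝ} (ht : 0 < t) (y : E2) :
    ∫⁻ x : E2, ENNReal.ofReal (heatK t (y - x)) = 1 := by
  have hmp : MeasurePreserving (fun x : E2 => y - x) volume volume := by
    have := ((measurePreserving_add_left (volume : Measure E2) y).comp
      (Measure.measurePreserving_neg (volume : Measure E2)))
    simpa [Function.comp_def, sub_eq_add_neg] using this
  have h1 : ∫⁻ x : E2, ENNReal.ofReal (heatK t (y - x))
      = ∫⁻ x : E2, ENNReal.ofReal (heatK t x) :=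
    hmp.lintegral_comp (ENNReal.measurable_ofReal.comp (heatK_meas t))
  rw [h1, ← ofReal_integral_eq_lintegral_ofReal (integrable_heatK ht)
      (ae_of_all _ (heatK_nonneg ht)), integral_heatK ht, ENNReal.ofReal_one]

end aux

section spatial

variable {V : E2 → ℝ} {M : ℝ}

lemma S1 (hV0 : ∀ x, 0 ≤ V x) (hVmeas : Measurable V) (hM : ∀ x, V x ≤ M)
    (hVhalf : ∫⁻ x : E2, ENNReal.ofReal (V (Real.sqrt 2 • x)) = ENNReal.ofReal (1/2))
    {t : ℝ} (ht : 0 < t) (y : E2) :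
    ∫⁻ x : E2, ENNReal.ofReal (V (Real.sqrt 2 • x)) * ENNReal.ofReal (heatK t (y - x))
      ≤ ENNReal.ofReal (min (1/(4*π*t)) M) := by
  have hπ := Real.pi_pos
  have hVc : Measurable fun x : E2 => V (Real.sqrt 2 • x) :=
    hVmeas.comp (by fun_prop)
  have hmin : ENNReal.ofReal (min (1/(4*π*t)) M)
      = min (ENNReal.ofReal (1/(4*π*t))) (ENNReal.ofReal M) := by
    rcases le_total (1/(4*π*t)) M with h | h
    · rw [min_eq_left h, min_eq_left (ENNReal.ofReal_le_ofReal h)]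
    · rw [min_eq_right h, min_eq_right (ENNReal.ofReal_le_ofReal h)]
  rw [hmin, le_min_iff]
  constructor
  · calc ∫⁻ x : E2, ENNReal.ofReal (V (Real.sqrt 2 • x)) * ENNReal.ofReal (heatK t (y - x))
        ≤ ∫⁻ x : E2, ENNReal.ofReal (V (Real.sqrt 2 • x)) * ENNReal.ofReal ((2*π*t)⁻¹) :=
          lintegral_mono fun x => mul_le_mul_right (ENNReal.ofReal_le_ofReal (heatK_le ht _)) _
      _ = ENNReal.ofReal (1/2) * ENNReal.ofReal ((2*π*t)⁻¹) := by
          rw [lintegral_mul_const _ hVc.ennreal_ofReal, hVhalf]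
      _ = ENNReal.ofReal (1/(4*π*t)) := by
          rw [← ENNReal.ofReal_mul (by norm_num)]
          congr 1
          rw [eq_div_iff (by positivity)]
          field_simp
          ring
  · calc ∫⁻ x : E2, ENNReal.ofReal (V (Real.sqrt 2 • x)) * ENNReal.ofReal (heatK t (y - x))
        ≤ ∫⁻ x : E2, ENNReal.ofReal M * ENNReal.ofReal (heatK t (y - x)) :=
          lintegral_mono fun x => mul_le_mul_left (ENNReal.ofReal_le_ofReal (hM _)) _
      _ = ENNReal.ofReal M * 1 := by
          have hmeas : Measurable fun x : E2 => heatK t (y - x) :=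
            (heatK_meas t).comp (measurable_const.sub measurable_id)
          rw [lintegral_const_mul _ hmeas.ennreal_ofReal, lint_heatK ht]
      _ ≤ ENNReal.ofReal M := by rw [mul_one]

lemma lemS (hV0 : ∀ x, 0 ≤ V x) (hVmeas : Measurable V) (hM : ∀ x, V x ≤ M)
    (hVhalf : ∫⁻ x : E2, ENNReal.ofReal (V (Real.sqrt 2 • x)) = ENNReal.ofReal (1/2)) :
    ∀ (n : ℕ) (x₀ : E2) (t : Fin (n+1) → ℝ), (∀ i, 0 < t i) →
    ∫⁻ X : Fin (n+1) → E2, ∏ i : Fin (n+1), ENNReal.ofReal (V (Real.sqrt 2 • X i)) *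
        ENNReal.ofReal (heatK (t i) ((Fin.cons x₀ X : Fin (n+2) → E2) i.castSucc - X i))
      ≤ ∏ i : Fin (n+1), ENNReal.ofReal (min (1/(4*π*(t i))) M) := by
  have hVc : Measurable fun x : E2 => V (Real.sqrt 2 • x) :=
    hVmeas.comp (by fun_prop)
  intro n
  induction n with
  | zero =>
    intro x₀ t ht
    have hmp := MeasureTheory.volume_preserving_funUnique (Fin 1) E2
    have hf : Measurable fun x : E2 => ENNReal.ofReal (V (Real.sqrt 2 • x)) *
        ENNReal.ofReal (heatK (t 0) (x₀ - x)) :=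
      (ENNReal.measurable_ofReal.comp hVc).mul (ENNReal.measurable_ofReal.comp
        ((heatK_meas _).comp (measurable_const.sub measurable_id)))
    calc ∫⁻ X : Fin 1 → E2, ∏ i : Fin 1, ENNReal.ofReal (V (Real.sqrt 2 • X i)) *
          ENNReal.ofReal (heatK (t i) ((Fin.cons x₀ X : Fin 2 → E2) i.castSucc - X i))
        = ∫⁻ X : Fin 1 → E2, (fun x : E2 => ENNReal.ofReal (V (Real.sqrt 2 • x)) *
            ENNReal.ofReal (heatK (t 0) (x₀ - x)))
            ((MeasurableEquiv.funUnique (Fin 1) E2) X) := by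
          apply lintegral_congr
          intro X
          rw [Fin.prod_univ_one]
          rfl
      _ = ∫⁻ x : E2, ENNReal.ofReal (V (Real.sqrt 2 • x)) *
            ENNReal.ofReal (heatK (t 0) (x₀ - x)) := hmp.lintegral_comp hf
      _ ≤ ENNReal.ofReal (min (1/(4*π*(t 0))) M) := S1 hV0 hVmeas hM hVhalf (ht 0) x₀
      _ = _ := by rw [Fin.prod_univ_one]
  | succ n ih =>
    intro x₀ t ht
    have hQm : Measurable fun X : Fin (n+2) → E2 =>
        ∏ i : Fin (n+2), ENNReal.ofReal (V (Real.sqrt 2 • X i)) *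
          ENNReal.ofReal (heatK (t i) ((Fin.cons x₀ X : Fin (n+3) → E2) i.castSucc - X i)) := by
      apply Finset.measurable_prod
      intro i _
      have hc : Measurable fun X : Fin (n+2) → E2 => (Fin.cons x₀ X : Fin (n+3) → E2) i.castSucc := by
        induction i.castSucc using Fin.cases with
        | zero => simpa using measurable_const
        | succ j => simpa using measurable_pi_apply j
      exact (ENNReal.measurable_ofReal.comp (hVc.comp (measurable_pi_apply i))).mul
        (ENNReal.measurable_ofReal.comp ((heatK_meas _).comp
          (hc.sub (measurable_pi_apply i))))
    have hmp := (MeasureTheory.volume_preserving_piFinSuccAbove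
        (fun _ : Fin (n+2) => E2) 0).symm
    rw [← hmp.lintegral_comp hQm]
    rw [MeasureTheory.Measure.volume_eq_prod]
    have hsymm : ∀ p : E2 × (Fin (n+1) → E2),
        (MeasurableEquiv.piFinSuccAbove (fun _ : Fin (n+2) => E2) 0).symm p
          = Fin.cons p.1 p.2 := by
      intro p
      rw [MeasurableEquiv.piFinSuccAbove_symm_apply]
      exact Fin.insertNth_zero' p.1 p.2
    simp_rw [hsymm]
    have hcons : Measurable fun p : E2 × (Fin (n+1) → E2) => (Fin.cons p.1 p.2 : Fin (n+2) → E2) := by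
      apply measurable_pi_lambda
      intro i
      induction i using Fin.cases with
      | zero => simp only [Fin.cons_zero]; exact measurable_fst
      | succ j => simp only [Fin.cons_succ]; exact (measurable_pi_apply j).comp measurable_snd
    have hmeasP : Measurable fun a : E2 × (Fin (n+1) → E2) =>
        ∏ i : Fin (n+2), ENNReal.ofReal (V (Real.sqrt 2 • (Fin.cons a.1 a.2 : Fin (n+2) → E2) i)) *
          ENNReal.ofReal (heatK (t i) ((Fin.cons x₀ (Fin.cons a.1 a.2) : Fin (n+3) → E2) i.castSucc
            - (Fin.cons a.1 a.2 : Fin (n+2) → E2) i)) := hQm.comp hcons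
    rw [lintegral_prod _ hmeasP.aemeasurable]
    -- pointwise rewrite of the product
    have key : ∀ (x : E2) (X' : Fin (n+1) → E2),
        (∏ i : Fin (n+2), ENNReal.ofReal (V (Real.sqrt 2 • (Fin.cons x X' : Fin (n+2) → E2) i)) *
          ENNReal.ofReal (heatK (t i)
            ((Fin.cons x₀ (Fin.cons x X') : Fin (n+3) → E2) i.castSucc
              - (Fin.cons x X' : Fin (n+2) → E2) i)))
        = (ENNReal.ofReal (V (Real.sqrt 2 • x)) * ENNReal.ofReal (heatK (t 0) (x₀ - x))) *
          ∏ j : Fin (n+1), ENNReal.ofReal (V (Real.sqrt 2 • X' j)) *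
            ENNReal.ofReal (heatK ((t ∘ Fin.succ) j)
              ((Fin.cons x X' : Fin (n+2) → E2) j.castSucc - X' j)) := by
      intro x X'
      rw [Fin.prod_univ_succ]
      simp [Fin.cons_zero, Fin.cons_succ, Fin.castSucc_zero, ← Fin.succ_castSucc]
    simp_rw [key]
    calc ∫⁻ x : E2, ∫⁻ X' : Fin (n+1) → E2,
          (ENNReal.ofReal (V (Real.sqrt 2 • x)) * ENNReal.ofReal (heatK (t 0) (x₀ - x))) *
          ∏ j : Fin (n+1), ENNReal.ofReal (V (Real.sqrt 2 • X' j)) *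
            ENNReal.ofReal (heatK ((t ∘ Fin.succ) j)
              ((Fin.cons x X' : Fin (n+2) → E2) j.castSucc - X' j))
        = ∫⁻ x : E2,
          (ENNReal.ofReal (V (Real.sqrt 2 • x)) * ENNReal.ofReal (heatK (t 0) (x₀ - x))) *
          ∫⁻ X' : Fin (n+1) → E2, ∏ j : Fin (n+1), ENNReal.ofReal (V (Real.sqrt 2 • X' j)) *
            ENNReal.ofReal (heatK ((t ∘ Fin.succ) j)
              ((Fin.cons x X' : Fin (n+2) → E2) j.castSucc - X' j)) := by
          congr 1
          ext x
          exact lintegral_const_mul' _ _ (ENNReal.mul_ne_top ENNReal.ofReal_ne_top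
            ENNReal.ofReal_ne_top)
      _ ≤ ∫⁻ x : E2,
          (ENNReal.ofReal (V (Real.sqrt 2 • x)) * ENNReal.ofReal (heatK (t 0) (x₀ - x))) *
          ∏ j : Fin (n+1), ENNReal.ofReal (min (1/(4*π*((t ∘ Fin.succ) j))) M) := by
          apply lintegral_mono
          intro x
          exact mul_le_mul_right (ih x (t ∘ Fin.succ) (fun j => ht j.succ)) _
      _ = (∫⁻ x : E2, ENNReal.ofReal (V (Real.sqrt 2 • x)) *
            ENNReal.ofReal (heatK (t 0) (x₀ - x))) *
          ∏ j : Fin (n+1), ENNReal.ofReal (min (1/(4*π*((t ∘ Fin.succ) j))) M) :=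
          lintegral_mul_const' _ _ (ENNReal.prod_ne_top fun j _ => ENNReal.ofReal_ne_top)
      _ ≤ _ := by
          rw [Fin.prod_univ_succ
            (f := fun i : Fin (n+2) => ENNReal.ofReal (min (1/(4*π*(t i))) M))]
          exact mul_le_mul' (S1 hV0 hVmeas hM hVhalf (ht 0) x₀) le_rfl

end spatial

section timelemma

open scoped ENNReal

lemma simplexMeasurable (m : ℕ) (b s : ℝ) :
    MeasurableSet {σ : Fin (m+1) → ℝ | StrictMono σ ∧ b < σ 0 ∧ σ (Fin.last m) < s} := by
  have h1 : MeasurableSet {σ : Fin (m+1) → ℝ | StrictMono σ} := by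
    have he : {σ : Fin (m+1) → ℝ | StrictMono σ}
        = ⋂ i : Fin m, {σ : Fin (m+1) → ℝ | σ i.castSucc < σ i.succ} := by
      ext σ; simp [Fin.strictMono_iff_lt_succ]
    rw [he]
    exact MeasurableSet.iInter fun i =>
      measurableSet_lt (measurable_pi_apply i.castSucc) (measurable_pi_apply i.succ)
  have h2 : MeasurableSet {σ : Fin (m+1) → ℝ | b < σ 0} :=
    measurableSet_lt measurable_const (measurable_pi_apply 0)
  have h3 : MeasurableSet {σ : Fin (m+1) → ℝ | σ (Fin.last m) < s} :=
    measurableSet_lt (measurable_pi_apply (Fin.last m)) measurable_const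
  have he2 : {σ : Fin (m+1) → ℝ | StrictMono σ ∧ b < σ 0 ∧ σ (Fin.last m) < s}
      = {σ : Fin (m+1) → ℝ | StrictMono σ}
        ∩ ({σ : Fin (m+1) → ℝ | b < σ 0} ∩ {σ : Fin (m+1) → ℝ | σ (Fin.last m) < s}) := rfl
  rw [he2]
  exact h1.inter (h2.inter h3)

lemma lemT (g : ℝ → ℝ≥0∞) (hg : Measurable g) (s : ℝ) :
    ∀ (n : ℕ) (a : ℝ), 0 ≤ a →
    ∫⁻ σ : Fin (n+1) → ℝ,
      Set.indicator {σ : Fin (n+1) → ℝ | StrictMono σ ∧ a < σ 0 ∧ σ (Fin.last n) < s}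
        (fun σ => ∏ i : Fin (n+1),
          g ((Fin.cons a σ : Fin (n+2) → ℝ) i.succ - (Fin.cons a σ : Fin (n+2) → ℝ) i.castSucc)) σ
    ≤ (∫⁻ r in Set.Ioc (0:ℝ) s, g r) ^ n * ∫⁻ r in Set.Ioc (0:ℝ) (s - a), g r := by
  have htrans : ∀ (a b : ℝ), ∫⁻ x in Set.Ioo a b, g (x - a) = ∫⁻ r in Set.Ioo 0 (b - a), g r := by
    intro a b
    have hemb : MeasurableEmbedding (fun x : ℝ => x + a) :=
      (MeasurableEquiv.addRight a).measurableEmbedding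
    have hmp : MeasurePreserving (fun x : ℝ => x + a) volume volume :=
      measurePreserving_add_right volume a
    have h := hmp.setLIntegral_comp_preimage_emb hemb (fun y => g (y - a)) (Set.Ioo a b)
    have hpre : (fun x : ℝ => x + a) ⁻¹' Set.Ioo a b = Set.Ioo 0 (b - a) := by
      ext x
      simp only [Set.mem_preimage, Set.mem_Ioo]
      constructor <;> rintro ⟨h1, h2⟩ <;> constructor <;> linarith
    rw [hpre] at h
    rw [← h]
    apply setLIntegral_congr_fun measurableSet_Ioo
    intro x _
    dsimp only
    rw [add_sub_cancel_right]
  intro n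
  induction n with
  | zero =>
    intro a ha
    have hmp := MeasureTheory.volume_preserving_funUnique (Fin 1) ℝ
    have hf : Measurable fun x : ℝ => Set.indicator (Set.Ioo a s) (fun y => g (y - a)) x :=
      (hg.comp (measurable_id.sub_const a)).indicator measurableSet_Ioo
    calc ∫⁻ σ : Fin 1 → ℝ,
        Set.indicator {σ : Fin 1 → ℝ | StrictMono σ ∧ a < σ 0 ∧ σ (Fin.last 0) < s}
          (fun σ => ∏ i : Fin 1,
            g ((Fin.cons a σ : Fin 2 → ℝ) i.succ - (Fin.cons a σ : Fin 2 → ℝ) i.castSucc)) σ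
        = ∫⁻ σ : Fin 1 → ℝ, Set.indicator (Set.Ioo a s) (fun y => g (y - a))
            ((MeasurableEquiv.funUnique (Fin 1) ℝ) σ) := by
          apply lintegral_congr
          intro σ
          have he : (MeasurableEquiv.funUnique (Fin 1) ℝ) σ = σ 0 := rfl
          rw [he]
          have h1 : σ ∈ {σ : Fin 1 → ℝ | StrictMono σ ∧ a < σ 0 ∧ σ (Fin.last 0) < s}
              ↔ σ 0 ∈ Set.Ioo a s := by
            simp only [Set.mem_setOf_eq, Set.mem_Ioo]
            constructor
            · rintro ⟨-, h2, h3⟩; exact ⟨h2, h3⟩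
            · rintro ⟨h2, h3⟩; exact ⟨Subsingleton.strictMono σ, h2, h3⟩
          have h2 : (∏ i : Fin 1,
              g ((Fin.cons a σ : Fin 2 → ℝ) i.succ - (Fin.cons a σ : Fin 2 → ℝ) i.castSucc))
              = g (σ 0 - a) := by
            rw [Fin.prod_univ_one]
            rfl
          by_cases hmem : σ 0 ∈ Set.Ioo a s
          · rw [Set.indicator_of_mem (h1.mpr hmem), Set.indicator_of_mem hmem, h2]
          · rw [Set.indicator_of_notMem (fun hc => hmem (h1.mp hc)),
              Set.indicator_of_notMem hmem]
      _ = ∫⁻ x : ℝ, Set.indicator (Set.Ioo a s) (fun y => g (y - a)) x := hmp.lintegral_comp hf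
      _ = ∫⁻ x in Set.Ioo a s, g (x - a) := lintegral_indicator measurableSet_Ioo _
      _ = ∫⁻ r in Set.Ioo 0 (s - a), g r := htrans a s
      _ ≤ (∫⁻ r in Set.Ioc (0:ℝ) s, g r) ^ 0 * ∫⁻ r in Set.Ioc (0:ℝ) (s - a), g r := by
          rw [pow_zero, one_mul]
          exact lintegral_mono_set Set.Ioo_subset_Ioc_self
  | succ n ih =>
    intro a ha
    set C : ℝ≥0∞ := ∫⁻ r in Set.Ioc (0:ℝ) s, g r with hCdef
    -- the inner (n+1)-fold integrand, parameterized by the new base point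
    set F' : ℝ → (Fin (n+1) → ℝ) → ℝ≥0∞ := fun b σ' =>
      Set.indicator {σ : Fin (n+1) → ℝ | StrictMono σ ∧ b < σ 0 ∧ σ (Fin.last n) < s}
        (fun σ => ∏ i : Fin (n+1),
          g ((Fin.cons b σ : Fin (n+2) → ℝ) i.succ - (Fin.cons b σ : Fin (n+2) → ℝ) i.castSucc)) σ'
      with hF'def
    have hdeltam : ∀ (b : ℝ) (k : Fin (n+2)),
        Measurable fun σ : Fin (n+1) → ℝ => (Fin.cons b σ : Fin (n+2) → ℝ) k := by
      intro b k
      induction k using Fin.cases with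
      | zero => simp only [Fin.cons_zero]; exact measurable_const
      | succ j => simp only [Fin.cons_succ]; exact measurable_pi_apply j
    have hsetm : ∀ b : ℝ,
        MeasurableSet {σ : Fin (n+1) → ℝ | StrictMono σ ∧ b < σ 0 ∧ σ (Fin.last n) < s} :=
      fun b => simplexMeasurable n b s
    have hF'm : ∀ b : ℝ, Measurable (F' b) := by
      intro b
      apply Measurable.indicator _ (hsetm b)
      exact Finset.measurable_prod _ fun i _ =>
        hg.comp ((hdeltam b i.succ).sub (hdeltam b i.castSucc))
    -- full integrand measurable
    have hFm : Measurable (Set.indicator {σ : Fin (n+2) → ℝ | StrictMono σ ∧ a < σ 0 ∧ σ (Fin.last (n+1)) < s}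
          (fun σ => ∏ i : Fin (n+2),
            g ((Fin.cons a σ : Fin (n+3) → ℝ) i.succ - (Fin.cons a σ : Fin (n+3) → ℝ) i.castSucc))) := by
      have hdeltam2 : ∀ (k : Fin (n+3)),
          Measurable fun σ : Fin (n+2) → ℝ => (Fin.cons a σ : Fin (n+3) → ℝ) k := by
        intro k
        induction k using Fin.cases with
        | zero => simp only [Fin.cons_zero]; exact measurable_const
        | succ j => simp only [Fin.cons_succ]; exact measurable_pi_apply j
      have hsetm2 : MeasurableSet {σ : Fin (n+2) → ℝ | StrictMono σ ∧ a < σ 0 ∧ σ (Fin.last (n+1)) < s} :=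
        simplexMeasurable (n+1) a s
      apply Measurable.indicator _ hsetm2
      exact Finset.measurable_prod _ fun i _ =>
        hg.comp ((hdeltam2 i.succ).sub (hdeltam2 i.castSucc))
    have hmp := (MeasureTheory.volume_preserving_piFinSuccAbove (fun _ : Fin (n+2) => ℝ) 0).symm
    rw [← hmp.lintegral_comp hFm]
    rw [MeasureTheory.Measure.volume_eq_prod]
    have hsymm : ∀ p : ℝ × (Fin (n+1) → ℝ),
        (MeasurableEquiv.piFinSuccAbove (fun _ : Fin (n+2) => ℝ) 0).symm p
          = Fin.cons p.1 p.2 := by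
      intro p
      rw [MeasurableEquiv.piFinSuccAbove_symm_apply]
      exact Fin.insertNth_zero' p.1 p.2
    simp_rw [hsymm]
    have hcons : Measurable fun p : ℝ × (Fin (n+1) → ℝ) => (Fin.cons p.1 p.2 : Fin (n+2) → ℝ) := by
      apply measurable_pi_lambda
      intro i
      induction i using Fin.cases with
      | zero => simp only [Fin.cons_zero]; exact measurable_fst
      | succ j => simp only [Fin.cons_succ]; exact (measurable_pi_apply j).comp measurable_snd
    have hmeasP : Measurable fun p : ℝ × (Fin (n+1) → ℝ) =>
        Set.indicator {σ : Fin (n+2) → ℝ | StrictMono σ ∧ a < σ 0 ∧ σ (Fin.last (n+1)) < s}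
          (fun σ => ∏ i : Fin (n+2),
            g ((Fin.cons a σ : Fin (n+3) → ℝ) i.succ - (Fin.cons a σ : Fin (n+3) → ℝ) i.castSucc))
          (Fin.cons p.1 p.2) := hFm.comp hcons
    rw [lintegral_prod _ hmeasP.aemeasurable]
    -- pointwise splitting
    have key : ∀ (σ₀ : ℝ) (σ' : Fin (n+1) → ℝ),
        Set.indicator {σ : Fin (n+2) → ℝ | StrictMono σ ∧ a < σ 0 ∧ σ (Fin.last (n+1)) < s}
          (fun σ => ∏ i : Fin (n+2),
            g ((Fin.cons a σ : Fin (n+3) → ℝ) i.succ - (Fin.cons a σ : Fin (n+3) → ℝ) i.castSucc))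
          (Fin.cons σ₀ σ')
        = Set.indicator (Set.Ioi a) (fun x => g (x - a)) σ₀ * F' σ₀ σ' := by
      intro σ₀ σ'
      have hmono : StrictMono (Fin.cons σ₀ σ' : Fin (n+2) → ℝ) ↔ σ₀ < σ' 0 ∧ StrictMono σ' := by
        rw [Fin.strictMono_iff_lt_succ, Fin.strictMono_iff_lt_succ (f := σ'), Fin.forall_fin_succ]
        constructor
        · rintro ⟨h0, hrest⟩
          refine ⟨by simpa using h0, fun i => ?_⟩
          have := hrest i
          rwa [← Fin.succ_castSucc, Fin.cons_succ, Fin.cons_succ] at this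
        · rintro ⟨h0, hrest⟩
          refine ⟨by simpa using h0, fun i => ?_⟩
          rw [← Fin.succ_castSucc, Fin.cons_succ, Fin.cons_succ]
          exact hrest i
      have hlast : (Fin.cons σ₀ σ' : Fin (n+2) → ℝ) (Fin.last (n+1)) = σ' (Fin.last n) := by
        rw [← Fin.succ_last, Fin.cons_succ]
      have hzero : (Fin.cons σ₀ σ' : Fin (n+2) → ℝ) 0 = σ₀ := Fin.cons_zero _ _
      have hprod : (∏ i : Fin (n+2),
          g ((Fin.cons a (Fin.cons σ₀ σ') : Fin (n+3) → ℝ) i.succ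
            - (Fin.cons a (Fin.cons σ₀ σ') : Fin (n+3) → ℝ) i.castSucc))
          = g (σ₀ - a) * ∏ i : Fin (n+1),
            g ((Fin.cons σ₀ σ' : Fin (n+2) → ℝ) i.succ
              - (Fin.cons σ₀ σ' : Fin (n+2) → ℝ) i.castSucc) := by
        rw [Fin.prod_univ_succ]
        simp [Fin.cons_zero, Fin.cons_succ, ← Fin.succ_castSucc]
      by_cases h1 : a < σ₀
      · by_cases h2 : StrictMono σ' ∧ σ₀ < σ' 0 ∧ σ' (Fin.last n) < s
        · have h2' : σ' ∈ {σ : Fin (n+1) → ℝ | StrictMono σ ∧ σ₀ < σ 0 ∧ σ (Fin.last n) < s} := h2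
          have hbig : Fin.cons σ₀ σ' ∈ {σ : Fin (n+2) → ℝ | StrictMono σ ∧ a < σ 0 ∧ σ (Fin.last (n+1)) < s} := by
            refine ⟨hmono.mpr ⟨h2.2.1, h2.1⟩, ?_, ?_⟩
            · rwa [hzero]
            · rw [hlast]; exact h2.2.2
          rw [Set.indicator_of_mem hbig, Set.indicator_of_mem (Set.mem_Ioi.mpr h1)]
          simp only [hF'def]
          rw [Set.indicator_of_mem h2']
          exact hprod
        · have h2' : σ' ∉ {σ : Fin (n+1) → ℝ | StrictMono σ ∧ σ₀ < σ 0 ∧ σ (Fin.last n) < s} :=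
            fun hc => h2 hc
          have hbig : Fin.cons σ₀ σ' ∉ {σ : Fin (n+2) → ℝ | StrictMono σ ∧ a < σ 0 ∧ σ (Fin.last (n+1)) < s} := by
            intro hc
            rcases hc with ⟨hc1, hc2, hc3⟩
            rw [hmono] at hc1
            rw [hlast] at hc3
            exact h2 ⟨hc1.2, hc1.1, hc3⟩
          rw [Set.indicator_of_notMem hbig]
          simp only [hF'def]
          rw [Set.indicator_of_notMem h2', mul_zero]
      · have hbig : Fin.cons σ₀ σ' ∉ {σ : Fin (n+2) → ℝ | StrictMono σ ∧ a < σ 0 ∧ σ (Fin.last (n+1)) < s} := by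
          intro hc
          rw [Set.mem_setOf_eq, hzero] at hc
          exact h1 hc.2.1
        rw [Set.indicator_of_notMem hbig, Set.indicator_of_notMem (by simpa using h1), zero_mul]
    simp_rw [key]
    -- pull the constant (in σ') factor out
    have hpull : ∀ σ₀ : ℝ,
        ∫⁻ σ' : Fin (n+1) → ℝ, Set.indicator (Set.Ioi a) (fun x => g (x - a)) σ₀ * F' σ₀ σ'
          = Set.indicator (Set.Ioi a) (fun x => g (x - a)) σ₀ * ∫⁻ σ', F' σ₀ σ' := fun σ₀ =>
      lintegral_const_mul _ (hF'm σ₀)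
    simp_rw [hpull]
    -- pointwise bound for the σ₀-integrand
    have hbound : ∀ σ₀ : ℝ,
        Set.indicator (Set.Ioi a) (fun x => g (x - a)) σ₀ * ∫⁻ σ', F' σ₀ σ'
          ≤ Set.indicator (Set.Ioo a s) (fun x => g (x - a)) σ₀ * (C ^ n * C) := by
      intro σ₀
      by_cases h1 : a < σ₀
      · rw [Set.indicator_of_mem (Set.mem_Ioi.mpr h1)]
        by_cases h2 : σ₀ < s
        · rw [Set.indicator_of_mem (Set.mem_Ioo.mpr ⟨h1, h2⟩)]
          apply mul_le_mul_right
          calc ∫⁻ σ', F' σ₀ σ' ≤ C ^ n * ∫⁻ r in Set.Ioc (0:ℝ) (s - σ₀), g r :=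
                ih σ₀ (le_of_lt (lt_of_le_of_lt ha h1))
            _ ≤ C ^ n * C := by
                apply mul_le_mul_right
                apply lintegral_mono_set
                apply Set.Ioc_subset_Ioc le_rfl
                linarith [lt_of_le_of_lt ha h1]
        · rw [Set.indicator_of_notMem (by simp [Set.mem_Ioo]; intro; linarith)]
          have hz : ∫⁻ σ', F' σ₀ σ' = 0 := by
            have hD : ∫⁻ σ', F' σ₀ σ' ≤ C ^ n * ∫⁻ r in Set.Ioc (0:ℝ) (s - σ₀), g r :=
              ih σ₀ (le_of_lt (lt_of_le_of_lt ha h1))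
            have : Set.Ioc (0:ℝ) (s - σ₀) = ∅ := Set.Ioc_eq_empty (by intro h; linarith)
            rw [this] at hD
            simpa using hD
          rw [hz, mul_zero, zero_mul]
      · rw [Set.indicator_of_notMem (by simpa using h1),
          Set.indicator_of_notMem (by simp [Set.mem_Ioo]; intro h; exact absurd h h1)]
        simp
    calc ∫⁻ σ₀ : ℝ, Set.indicator (Set.Ioi a) (fun x => g (x - a)) σ₀ * ∫⁻ σ', F' σ₀ σ'
        ≤ ∫⁻ σ₀ : ℝ, Set.indicator (Set.Ioo a s) (fun x => g (x - a)) σ₀ * (C ^ n * C) :=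
          lintegral_mono hbound
      _ = (∫⁻ σ₀ : ℝ, Set.indicator (Set.Ioo a s) (fun x => g (x - a)) σ₀) * (C ^ n * C) :=
          lintegral_mul_const _ ((hg.comp (measurable_id.sub_const a)).indicator measurableSet_Ioo)
      _ = (∫⁻ x in Set.Ioo a s, g (x - a)) * (C ^ n * C) := by
          rw [lintegral_indicator measurableSet_Ioo]
      _ = (∫⁻ r in Set.Ioo 0 (s - a), g r) * (C ^ n * C) := by rw [htrans a s]
      _ ≤ (∫⁻ r in Set.Ioc (0:ℝ) (s - a), g r) * (C ^ n * C) :=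
          mul_le_mul_left (lintegral_mono_set Set.Ioo_subset_Ioc_self) _
      _ = C ^ (n+1) * ∫⁻ r in Set.Ioc (0:ℝ) (s - a), g r := by
          rw [pow_succ]
          ring
  
end timelemma

open scoped ENNReal

/-- The `n`-fold simplex integral (here with `n+1` time/space variables, so that the
number of variables is an arbitrary integer `≥ 1`) of the chaos expansion is bounded by
the `n`-th power of `∫₀ˢ min(1/(4πr), ‖V‖_∞) dr`.  The convention `s₀ = 0`, `x₀` given,
is implemented by `Fin.cons`. -/
theorem stmt1 (V : EuclideanSpace ℝ (Fin 2) → ℝ)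
    (hV0 : ∀ x, 0 ≤ V x) (hVmeas : Measurable V)
    (hVbdd : ∃ M : ℝ, ∀ x, V x ≤ M)
    (hVint : ∫ x, V x = 1)
    (s : ℝ) (hs : 0 < s) (n : ℕ) (x₀ : EuclideanSpace ℝ (Fin 2)) :
    (∫ σ : Fin (n+1) → ℝ,
      Set.indicator {σ : Fin (n+1) → ℝ | StrictMono σ ∧ 0 < σ 0 ∧ σ (Fin.last n) < s}
        (fun σ => ∫ X : Fin (n+1) → EuclideanSpace ℝ (Fin 2),
          ∏ i : Fin (n+1),
            V (Real.sqrt 2 • X i) *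
              heatK ((Fin.cons 0 σ : Fin (n+2) → ℝ) i.succ
                      - (Fin.cons 0 σ : Fin (n+2) → ℝ) i.castSucc)
                ((Fin.cons x₀ X : Fin (n+2) → EuclideanSpace ℝ (Fin 2)) i.castSucc
                  - (Fin.cons x₀ X : Fin (n+2) → EuclideanSpace ℝ (Fin 2)) i.succ)) σ)
    ≤ (∫ r in Set.Ioc (0:ℝ) s, min (1 / (4 * π * r)) (⨆ z, V z)) ^ (n+1) := by
  classical
  obtain ⟨M₀, hM₀⟩ := hVbdd
  set M := ⨆ z, V z with hMdef
  have hbdd : BddAbove (Set.range V) := ⟨M₀, by rintro _ ⟨x, rfl⟩; exact hM₀ x⟩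
  have hM : ∀ x, V x ≤ M := fun x => le_ciSup hbdd x
  have hM0 : (0:ℝ) ≤ M := le_trans (hV0 x₀) (hM x₀)
  have hπ := Real.pi_pos
  have hInt : Integrable V := by
    by_contra h
    rw [MeasureTheory.integral_undef h] at hVint
    norm_num at hVint
  have hsqrt2 : Real.sqrt 2 ≠ 0 := by positivity
  have hIntc : Integrable fun x : E2 => V (Real.sqrt 2 • x) :=
    (MeasureTheory.integrable_comp_smul_iff volume V hsqrt2).2 hInt
  have hVhalf : ∫⁻ x : E2, ENNReal.ofReal (V (Real.sqrt 2 • x)) = ENNReal.ofReal (1/2) := by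
    rw [← MeasureTheory.ofReal_integral_eq_lintegral_ofReal hIntc (ae_of_all _ fun x => hV0 _)]
    congr 1
    rw [MeasureTheory.Measure.integral_comp_smul volume V (Real.sqrt 2), hVint,
      finrank_euclideanSpace_fin, smul_eq_mul, mul_one,
      Real.sq_sqrt (by norm_num : (0:ℝ) ≤ 2)]
    norm_num
  set g : ℝ → ℝ≥0∞ := fun r => ENNReal.ofReal (min (1/(4*π*r)) M) with hgdef
  have hminmeas : Measurable fun r : ℝ => min (1/(4*π*r)) M :=
    (measurable_const.div (measurable_id.const_mul (4*π))).min measurable_const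
  have hgmeas : Measurable g := hminmeas.ennreal_ofReal
  set S := {σ : Fin (n+1) → ℝ | StrictMono σ ∧ 0 < σ 0 ∧ σ (Fin.last n) < s} with hSdef
  have hSmeas : MeasurableSet S := simplexMeasurable n 0 s
  have hΔpos : ∀ σ ∈ S, ∀ i : Fin (n+1),
      0 < (Fin.cons 0 σ : Fin (n+2) → ℝ) i.succ - (Fin.cons 0 σ : Fin (n+2) → ℝ) i.castSucc := by
    intro σ hσ i
    induction i using Fin.cases with
    | zero =>
      simp only [Fin.cons_succ, Fin.castSucc_zero, Fin.cons_zero, sub_zero]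
      exact hσ.2.1
    | succ j =>
      simp only [Fin.cons_succ, ← Fin.succ_castSucc]
      exact sub_pos.mpr (hσ.1 j.castSucc_lt_succ)
  -- measurability of the various coordinate maps
  have hconsT : ∀ k : Fin (n+2), Measurable fun σ : Fin (n+1) → ℝ =>
      (Fin.cons 0 σ : Fin (n+2) → ℝ) k := by
    intro k
    induction k using Fin.cases with
    | zero => simp only [Fin.cons_zero]; exact measurable_const
    | succ j => simp only [Fin.cons_succ]; exact measurable_pi_apply j
  have hconsX : ∀ k : Fin (n+2), Measurable fun X : Fin (n+1) → E2 =>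
      (Fin.cons x₀ X : Fin (n+2) → E2) k := by
    intro k
    induction k using Fin.cases with
    | zero => simp only [Fin.cons_zero]; exact measurable_const
    | succ j => simp only [Fin.cons_succ]; exact measurable_pi_apply j
  have hheatK2 : Measurable fun p : ℝ × E2 => heatK p.1 p.2 := by
    unfold heatK
    exact ((measurable_fst.const_mul (2*π)).inv).mul
      (Real.measurable_exp.comp ((((measurable_norm.comp measurable_snd).pow_const 2).neg).div
        (measurable_fst.const_mul 2)))
  -- the real integrand, jointly measurable
  have hPmeas : Measurable (Function.uncurry fun (σ : Fin (n+1) → ℝ) (X : Fin (n+1) → E2) =>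
      ∏ i : Fin (n+1), V (Real.sqrt 2 • X i) *
        heatK ((Fin.cons 0 σ : Fin (n+2) → ℝ) i.succ - (Fin.cons 0 σ : Fin (n+2) → ℝ) i.castSucc)
          ((Fin.cons x₀ X : Fin (n+2) → E2) i.castSucc
            - (Fin.cons x₀ X : Fin (n+2) → E2) i.succ)) := by
    apply Finset.measurable_prod
    intro i _
    apply Measurable.mul
    · exact hVmeas.comp (by fun_prop)
    · exact hheatK2.comp
        ((((hconsT i.succ).comp measurable_fst).sub ((hconsT i.castSucc).comp measurable_fst)).prodMk
          (((hconsX i.castSucc).comp measurable_snd).sub ((hconsX i.succ).comp measurable_snd)))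
  -- the ENNReal-valued integrand, jointly measurable
  have hQmeas : Measurable (Function.uncurry fun (σ : Fin (n+1) → ℝ) (X : Fin (n+1) → E2) =>
      ∏ i : Fin (n+1), ENNReal.ofReal (V (Real.sqrt 2 • X i)) *
        ENNReal.ofReal (heatK
          ((Fin.cons 0 σ : Fin (n+2) → ℝ) i.succ - (Fin.cons 0 σ : Fin (n+2) → ℝ) i.castSucc)
          ((Fin.cons x₀ X : Fin (n+2) → E2) i.castSucc
            - (Fin.cons x₀ X : Fin (n+2) → E2) i.succ))) := by
    apply Finset.measurable_prod
    intro i _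
    exact Measurable.mul
      (hVmeas.comp (((measurable_pi_apply i).comp measurable_snd).const_smul (Real.sqrt 2))).ennreal_ofReal
      (hheatK2.comp
        ((((hconsT i.succ).comp measurable_fst).sub ((hconsT i.castSucc).comp measurable_fst)).prodMk
          (((hconsX i.castSucc).comp measurable_snd).sub
            ((hconsX i.succ).comp measurable_snd)))).ennreal_ofReal
  set C : ℝ≥0∞ := ∫⁻ r in Set.Ioc (0:ℝ) s, g r with hCdef
  have hCne : C ≠ ⊤ := by
    have hle : C ≤ ENNReal.ofReal M * volume (Set.Ioc (0:ℝ) s) := by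
      rw [← MeasureTheory.setLIntegral_const]
      exact lintegral_mono fun r => ENNReal.ofReal_le_ofReal (min_le_right _ _)
    refine ne_top_of_le_ne_top ?_ hle
    apply ENNReal.mul_ne_top ENNReal.ofReal_ne_top
    rw [Real.volume_Ioc]
    exact ENNReal.ofReal_ne_top
  have hCreal : C.toReal = ∫ r in Set.Ioc (0:ℝ) s, min (1/(4*π*r)) M := by
    have hnn : 0 ≤ᵐ[volume.restrict (Set.Ioc (0:ℝ) s)] fun r => min (1/(4*π*r)) M := by
      filter_upwards [MeasureTheory.ae_restrict_mem measurableSet_Ioc] with r hr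
      exact le_min (le_of_lt (div_pos one_pos
        (mul_pos (by positivity : (0:ℝ) < 4*π) hr.1))) hM0
    rw [MeasureTheory.integral_eq_lintegral_of_nonneg_ae hnn hminmeas.aestronglyMeasurable]
  -- Step 1: rewrite the indicator through nonnegativity
  have hind : Set.indicator S
      (fun σ => ∫ X : Fin (n+1) → E2,
        ∏ i : Fin (n+1), V (Real.sqrt 2 • X i) *
          heatK ((Fin.cons 0 σ : Fin (n+2) → ℝ) i.succ
                  - (Fin.cons 0 σ : Fin (n+2) → ℝ) i.castSucc)
            ((Fin.cons x₀ X : Fin (n+2) → E2) i.castSucc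
              - (Fin.cons x₀ X : Fin (n+2) → E2) i.succ))
      = Set.indicator S
      (fun σ => (∫⁻ X : Fin (n+1) → E2,
        ∏ i : Fin (n+1), ENNReal.ofReal (V (Real.sqrt 2 • X i)) *
          ENNReal.ofReal (heatK
            ((Fin.cons 0 σ : Fin (n+2) → ℝ) i.succ - (Fin.cons 0 σ : Fin (n+2) → ℝ) i.castSucc)
            ((Fin.cons x₀ X : Fin (n+2) → E2) i.castSucc
              - (Fin.cons x₀ X : Fin (n+2) → E2) i.succ))).toReal) := by
    apply Set.indicator_congr
    intro σ hσ
    beta_reduce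
    rw [MeasureTheory.integral_eq_lintegral_of_nonneg_ae]
    · congr 1
      apply lintegral_congr
      intro X
      rw [ENNReal.ofReal_prod_of_nonneg
        (fun i _ => mul_nonneg (hV0 _) (heatK_nonneg (hΔpos σ hσ i) _))]
      exact Finset.prod_congr rfl fun i _ => ENNReal.ofReal_mul (hV0 _)
    · apply ae_of_all
      intro X
      exact Finset.prod_nonneg fun i _ => mul_nonneg (hV0 _) (heatK_nonneg (hΔpos σ hσ i) _)
    · exact (hPmeas.comp measurable_prodMk_left).aestronglyMeasurable
  rw [hind]
  -- Step 2: outer integral to lintegral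
  have hφmeas : Measurable (Set.indicator S
      (fun σ => (∫⁻ X : Fin (n+1) → E2,
        ∏ i : Fin (n+1), ENNReal.ofReal (V (Real.sqrt 2 • X i)) *
          ENNReal.ofReal (heatK
            ((Fin.cons 0 σ : Fin (n+2) → ℝ) i.succ - (Fin.cons 0 σ : Fin (n+2) → ℝ) i.castSucc)
            ((Fin.cons x₀ X : Fin (n+2) → E2) i.castSucc
              - (Fin.cons x₀ X : Fin (n+2) → E2) i.succ))).toReal)) :=
    (hQmeas.lintegral_prod_right').ennreal_toReal.indicator hSmeas
  rw [MeasureTheory.integral_eq_lintegral_of_nonneg_ae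
    (ae_of_all _ (Set.indicator_nonneg (fun σ _ => ENNReal.toReal_nonneg)))
    hφmeas.aestronglyMeasurable]
  -- Step 3: the main lintegral bound
  have hmain : (∫⁻ σ : Fin (n+1) → ℝ, ENNReal.ofReal (Set.indicator S
      (fun σ => (∫⁻ X : Fin (n+1) → E2,
        ∏ i : Fin (n+1), ENNReal.ofReal (V (Real.sqrt 2 • X i)) *
          ENNReal.ofReal (heatK
            ((Fin.cons 0 σ : Fin (n+2) → ℝ) i.succ - (Fin.cons 0 σ : Fin (n+2) → ℝ) i.castSucc)
            ((Fin.cons x₀ X : Fin (n+2) → E2) i.castSucc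
              - (Fin.cons x₀ X : Fin (n+2) → E2) i.succ))).toReal) σ)) ≤ C ^ (n+1) := by
    calc ∫⁻ σ : Fin (n+1) → ℝ, ENNReal.ofReal (Set.indicator S
          (fun σ => (∫⁻ X : Fin (n+1) → E2,
            ∏ i : Fin (n+1), ENNReal.ofReal (V (Real.sqrt 2 • X i)) *
              ENNReal.ofReal (heatK
                ((Fin.cons 0 σ : Fin (n+2) → ℝ) i.succ - (Fin.cons 0 σ : Fin (n+2) → ℝ) i.castSucc)
                ((Fin.cons x₀ X : Fin (n+2) → E2) i.castSucc
                  - (Fin.cons x₀ X : Fin (n+2) → E2) i.succ))).toReal) σ)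
        ≤ ∫⁻ σ : Fin (n+1) → ℝ, Set.indicator S
          (fun σ => ∫⁻ X : Fin (n+1) → E2,
            ∏ i : Fin (n+1), ENNReal.ofReal (V (Real.sqrt 2 • X i)) *
              ENNReal.ofReal (heatK
                ((Fin.cons 0 σ : Fin (n+2) → ℝ) i.succ - (Fin.cons 0 σ : Fin (n+2) → ℝ) i.castSucc)
                ((Fin.cons x₀ X : Fin (n+2) → E2) i.castSucc
                  - (Fin.cons x₀ X : Fin (n+2) → E2) i.succ))) σ := by
          apply lintegral_mono
          intro σ
          beta_reduce
          by_cases hσ : σ ∈ S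
          · rw [Set.indicator_of_mem hσ, Set.indicator_of_mem hσ]
            exact ENNReal.ofReal_toReal_le
          · rw [Set.indicator_of_notMem hσ, Set.indicator_of_notMem hσ, ENNReal.ofReal_zero]
      _ ≤ ∫⁻ σ : Fin (n+1) → ℝ, Set.indicator S
          (fun σ => ∏ i : Fin (n+1),
            g ((Fin.cons 0 σ : Fin (n+2) → ℝ) i.succ
              - (Fin.cons 0 σ : Fin (n+2) → ℝ) i.castSucc)) σ := by
          apply lintegral_mono
          intro σ
          beta_reduce
          by_cases hσ : σ ∈ S
          · rw [Set.indicator_of_mem hσ, Set.indicator_of_mem hσ]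
            exact lemS hV0 hVmeas hM hVhalf n x₀
              (fun i => (Fin.cons 0 σ : Fin (n+2) → ℝ) i.succ
                - (Fin.cons 0 σ : Fin (n+2) → ℝ) i.castSucc) (hΔpos σ hσ)
          · rw [Set.indicator_of_notMem hσ, Set.indicator_of_notMem hσ]
      _ ≤ C ^ n * ∫⁻ r in Set.Ioc (0:ℝ) (s - 0), g r := lemT g hgmeas s n 0 le_rfl
      _ = C ^ (n+1) := by rw [sub_zero, ← hCdef, pow_succ]
  calc (∫⁻ σ : Fin (n+1) → ℝ, ENNReal.ofReal (Set.indicator S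
      (fun σ => (∫⁻ X : Fin (n+1) → E2,
        ∏ i : Fin (n+1), ENNReal.ofReal (V (Real.sqrt 2 • X i)) *
          ENNReal.ofReal (heatK
            ((Fin.cons 0 σ : Fin (n+2) → ℝ) i.succ - (Fin.cons 0 σ : Fin (n+2) → ℝ) i.castSucc)
            ((Fin.cons x₀ X : Fin (n+2) → E2) i.castSucc
              - (Fin.cons x₀ X : Fin (n+2) → E2) i.succ))).toReal) σ)).toReal
      ≤ (C ^ (n+1)).toReal := ENNReal.toReal_mono (ENNReal.pow_ne_top hCne) hmain
    _ = C.toReal ^ (n+1) := ENNReal.toReal_pow _ _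
    _ = (∫ r in Set.Ioc (0:ℝ) s, min (1/(4*π*r)) M) ^ (n+1) := by rw [hCreal]
end

section
/- Let t > 0, K₀ > 0, a ∈ (0, 1], and ε ∈ (0, 1) with 4πK₀t ≥ ε². Set u = ε^{2a} t. Then for every s′ with 0 < s′ ≤ t − u, ∫_0^{s′} min( 1/(2(s′ − r)) + 1/(2r + 2u), 2πK₀/ε² ) dr ≤ (1/2) log(4πK₀ t) + 1/2 + (1 + a) log(1/ε). -/
open MeasureTheory Real

lemma bdd_intervalIntegrable {f : ℝ → ℝ} {a b M : ℝ} (hm : Measurable f)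
    (h : ∀ x ∈ Set.uIoc a b, |f x| ≤ M) :
    IntervalIntegrable f MeasureTheory.volume a b := by
  rw [intervalIntegrable_iff]
  refine MeasureTheory.Integrable.mono' (g := fun _ => M)
      (MeasureTheory.integrableOn_const ?_)
      hm.aestronglyMeasurable.restrict ?_
  · rw [Set.uIoc]; exact measure_Ioc_lt_top.ne
  · filter_upwards [MeasureTheory.ae_restrict_mem measurableSet_uIoc] with x hx using
      by simpa using h x hx

lemma min_add_le' {A B M : ℝ} (hA : 0 ≤ A) (hB : 0 ≤ B) (hM : 0 ≤ M) :
    min (A + B) M ≤ min A M + min B M := by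
  rcases le_total A M with h | h
  · rcases le_total B M with h' | h'
    · rw [min_eq_left h, min_eq_left h']; exact min_le_left _ _
    · rw [min_eq_right h']
      exact le_trans (min_le_right _ _) (le_add_of_nonneg_left (le_min hA hM))
  · rw [min_eq_right h]
    exact le_trans (min_le_right _ _) (le_add_of_nonneg_right (le_min hB hM))

lemma int_one_div_two_mul {a b : ℝ} (ha : 0 < a) (hb : 0 < b) :
    ∫ x in a..b, 1 / (2 * x) = (1 / 2) * Real.log (b / a) := by
  have h0 : (0 : ℝ) ∉ Set.uIcc a b := by
    intro h
    rcases Set.mem_uIcc.1 h with ⟨h1, _⟩ | ⟨h1, _⟩ <;> linarith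
  have : (fun x : ℝ => 1 / (2 * x)) = fun x : ℝ => (1 / 2) * (1 / x) := by
    funext x; rw [one_div, mul_inv, one_div]; ring
  rw [this, intervalIntegral.integral_const_mul, integral_one_div h0]

theorem stmt11 (t K₀ a ε : ℝ) (ht : 0 < t) (hK : 0 < K₀)
    (ha : 0 < a) (ha1 : a ≤ 1) (hε0 : 0 < ε) (hε1 : ε < 1)
    (hKt : ε ^ 2 ≤ 4 * π * K₀ * t)
    (s' : ℝ) (hs'0 : 0 < s') (hs' : s' ≤ t - ε ^ (2 * a) * t) :
    ∫ r in (0:ℝ)..s',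
        min (1 / (2 * (s' - r)) + 1 / (2 * r + 2 * (ε ^ (2 * a) * t))) (2 * π * K₀ / ε ^ 2)
      ≤ (1/2) * Real.log (4 * π * K₀ * t) + 1/2 + (1 + a) * Real.log (1/ε) := by
  have hπ : 0 < π := Real.pi_pos
  set u : ℝ := ε ^ (2 * a) * t with hu_def
  set M : ℝ := 2 * π * K₀ / ε ^ 2 with hM_def
  set δ : ℝ := ε ^ 2 / (4 * π * K₀) with hδ_def
  have hu : 0 < u := mul_pos (Real.rpow_pos_of_pos hε0 _) ht
  have hM : 0 < M := by positivity
  have hδ : 0 < δ := by positivity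
  have hδM : δ * M = 1 / 2 := by
    rw [hδ_def, hM_def]; field_simp; ring
  have hlogε : Real.log ε < 0 := Real.log_neg hε0 hε1
  have hs't : s' ≤ t := by linarith
  have hs'u : s' + u ≤ t := by linarith
  have h4 : (0 : ℝ) < 4 * π * K₀ * t := by positivity
  have hlogKt : 2 * Real.log ε ≤ Real.log (4 * π * K₀ * t) := by
    have := Real.log_le_log (by positivity : (0:ℝ) < ε ^ 2) hKt
    rwa [Real.log_pow] at this
  have hlog1ε : Real.log (1 / ε) = -Real.log ε := by
    rw [one_div, Real.log_inv]
  -- the main integrand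
  set F : ℝ → ℝ := fun r => min (1 / (2 * (s' - r)) + 1 / (2 * r + 2 * u)) M with hF_def
  have hFmeas : Measurable F := by
    apply Measurable.min _ measurable_const
    apply Measurable.add
    · simp only [one_div]
      exact ((measurable_const.sub measurable_id).const_mul 2).inv
    · simp only [one_div]
      exact ((measurable_id.const_mul 2).add measurable_const).inv
  have hFbdd : ∀ x ∈ Set.uIoc (0:ℝ) s', |F x| ≤ M := by
    intro x hx
    rw [Set.uIoc_of_le hs'0.le] at hx
    have hx1 : 0 < x := hx.1
    have hx2 : x ≤ s' := hx.2
    have hA : 0 ≤ 1 / (2 * (s' - x)) := div_nonneg one_pos.le (by linarith)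
    have hB : 0 ≤ 1 / (2 * x + 2 * u) := div_nonneg one_pos.le (by linarith)
    rw [abs_le]
    constructor
    · simp only [hF_def]
      have : (0:ℝ) ≤ min (1 / (2 * (s' - x)) + 1 / (2 * x + 2 * u)) M :=
        le_min (by linarith) hM.le
      linarith
    · exact min_le_right _ _
  have hFint : IntervalIntegrable F volume 0 s' := bdd_intervalIntegrable hFmeas hFbdd
  rcases le_or_gt s' δ with h1 | h1
  · -- small s' case: bound integrand by M
    have hb1 : ∫ r in (0:ℝ)..s', F r ≤ ∫ _r in (0:ℝ)..s', M := by
      apply intervalIntegral.integral_mono_on hs'0.le hFint intervalIntegrable_const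
      intro x _
      exact min_le_right _ _
    rw [intervalIntegral.integral_const, smul_eq_mul, sub_zero] at hb1
    have hb2 : s' * M ≤ 1 / 2 := by
      rw [← hδM]
      exact mul_le_mul_of_nonneg_right h1 hM.le
    have hb3 : (0:ℝ) ≤ (1/2) * Real.log (4 * π * K₀ * t) + (1 + a) * Real.log (1/ε) := by
      rw [hlog1ε]
      nlinarith [mul_pos ha (neg_pos.2 hlogε)]
    calc ∫ r in (0:ℝ)..s', F r ≤ s' * M := hb1
      _ ≤ 1 / 2 := hb2
      _ ≤ _ := by linarith
  · -- main case: δ < s'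
    set g₁ : ℝ → ℝ := fun r => min (1 / (2 * (s' - r))) M with hg₁_def
    set g₂ : ℝ → ℝ := fun r => min (1 / (2 * r + 2 * u)) M with hg₂_def
    set h : ℝ → ℝ := fun x => min (1 / (2 * x)) M with hh_def
    have hg₁meas : Measurable g₁ := by
      apply Measurable.min _ measurable_const
      simp only [one_div]
      exact ((measurable_const.sub measurable_id).const_mul 2).inv
    have hg₂meas : Measurable g₂ := by
      apply Measurable.min _ measurable_const
      simp only [one_div]
      exact ((measurable_id.const_mul 2).add measurable_const).inv
    have hhmeas : Measurable h := by
      apply Measurable.min _ measurable_const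
      simp only [one_div]
      exact (measurable_id.const_mul 2).inv
    have hg₁int : IntervalIntegrable g₁ volume 0 s' := by
      apply bdd_intervalIntegrable hg₁meas
      intro x hx
      rw [Set.uIoc_of_le hs'0.le] at hx
      have h2 := hx.2
      have : 0 ≤ 1 / (2 * (s' - x)) := div_nonneg one_pos.le (by linarith)
      rw [abs_le]
      exact ⟨by have := le_min this hM.le; linarith, min_le_right _ _⟩
    have hg₂int : IntervalIntegrable g₂ volume 0 s' := by
      apply bdd_intervalIntegrable hg₂meas
      intro x hx
      rw [Set.uIoc_of_le hs'0.le] at hx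
      have h2 := hx.1
      have : 0 ≤ 1 / (2 * x + 2 * u) := div_nonneg one_pos.le (by linarith)
      rw [abs_le]
      exact ⟨by have := le_min this hM.le; linarith, min_le_right _ _⟩
    have hhint : ∀ c d : ℝ, 0 ≤ c → c ≤ d → IntervalIntegrable h volume c d := by
      intro c d hc hcd
      apply bdd_intervalIntegrable hhmeas
      intro x hx
      rw [Set.uIoc_of_le hcd] at hx
      have hx1' : 0 < x := lt_of_le_of_lt hc hx.1
      have : 0 ≤ 1 / (2 * x) := div_nonneg one_pos.le (by linarith)
      rw [abs_le]
      exact ⟨by have := le_min this hM.le; linarith, min_le_right _ _⟩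
    -- step 1: F ≤ g₁ + g₂ on [0, s']
    have step1 : ∫ r in (0:ℝ)..s', F r ≤ ∫ r in (0:ℝ)..s', (g₁ r + g₂ r) := by
      apply intervalIntegral.integral_mono_on hs'0.le hFint (hg₁int.add hg₂int)
      intro x hx
      have h2 := hx.1
      have h3 := hx.2
      have hA : 0 ≤ 1 / (2 * (s' - x)) := div_nonneg one_pos.le (by linarith)
      have hB : 0 ≤ 1 / (2 * x + 2 * u) := div_nonneg one_pos.le (by linarith)
      exact min_add_le' hA hB hM.le
    have step2 : ∫ r in (0:ℝ)..s', (g₁ r + g₂ r)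
        = (∫ r in (0:ℝ)..s', g₁ r) + ∫ r in (0:ℝ)..s', g₂ r :=
      intervalIntegral.integral_add hg₁int hg₂int
    -- step 3: ∫ g₁ = ∫ h over [0, s']
    have step3 : ∫ r in (0:ℝ)..s', g₁ r = ∫ x in (0:ℝ)..s', h x := by
      have := intervalIntegral.integral_comp_sub_left (a := (0:ℝ)) (b := s') h s'
      rw [sub_self, sub_zero] at this
      exact this
    -- step 4: ∫₀^{s'} h ≤ 1/2 + (1/2) log (s'/δ)
    have step4 : ∫ x in (0:ℝ)..s', h x ≤ 1 / 2 + (1 / 2) * Real.log (s' / δ) := by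
      have hsplit : (∫ x in (0:ℝ)..δ, h x) + (∫ x in δ..s', h x) = ∫ x in (0:ℝ)..s', h x :=
        intervalIntegral.integral_add_adjacent_intervals (hhint 0 δ le_rfl hδ.le) (hhint δ s' hδ.le h1.le)
      have hpart1 : ∫ x in (0:ℝ)..δ, h x ≤ 1 / 2 := by
        have : ∫ x in (0:ℝ)..δ, h x ≤ ∫ _x in (0:ℝ)..δ, M := by
          apply intervalIntegral.integral_mono_on hδ.le (hhint 0 δ le_rfl hδ.le)
            intervalIntegrable_const
          intro x _
          exact min_le_right _ _
        rw [intervalIntegral.integral_const, smul_eq_mul, sub_zero] at this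
        calc ∫ x in (0:ℝ)..δ, h x ≤ δ * M := this
          _ = 1 / 2 := hδM
      have hcont : IntervalIntegrable (fun x : ℝ => 1 / (2 * x)) volume δ s' := by
        apply ContinuousOn.intervalIntegrable
        apply ContinuousOn.div continuousOn_const (by fun_prop)
        intro x hx
        rw [Set.uIcc_of_le h1.le] at hx
        have : 0 < x := lt_of_lt_of_le hδ hx.1
        exact ne_of_gt (by linarith)
      have hpart2 : ∫ x in δ..s', h x ≤ (1 / 2) * Real.log (s' / δ) := by
        have : ∫ x in δ..s', h x ≤ ∫ x in δ..s', 1 / (2 * x) := by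
          apply intervalIntegral.integral_mono_on h1.le (hhint δ s' hδ.le h1.le) hcont
          intro x _
          exact min_le_left _ _
        rwa [int_one_div_two_mul hδ hs'0] at this
      linarith
    -- step 5: ∫ g₂ ≤ (1/2) log ((s'+u)/u)
    have step5 : ∫ r in (0:ℝ)..s', g₂ r ≤ (1 / 2) * Real.log ((s' + u) / u) := by
      have hcont : IntervalIntegrable (fun r : ℝ => 1 / (2 * (r + u))) volume 0 s' := by
        apply ContinuousOn.intervalIntegrable
        apply ContinuousOn.div continuousOn_const (by fun_prop)
        intro x hx
        rw [Set.uIcc_of_le hs'0.le] at hx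
        have := hx.1
        exact ne_of_gt (by linarith)
      have hmono : ∫ r in (0:ℝ)..s', g₂ r ≤ ∫ r in (0:ℝ)..s', 1 / (2 * (r + u)) := by
        apply intervalIntegral.integral_mono_on hs'0.le hg₂int hcont
        intro x _
        have : 2 * x + 2 * u = 2 * (x + u) := by ring
        rw [hg₂_def]
        simp only [this]
        exact min_le_left _ _
      have hcomp : ∫ r in (0:ℝ)..s', 1 / (2 * (r + u)) = ∫ x in u..(s' + u), 1 / (2 * x) := by
        have := intervalIntegral.integral_comp_add_right (a := (0:ℝ)) (b := s')
          (fun x : ℝ => 1 / (2 * x)) u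
        simpa using this
      rw [hcomp, int_one_div_two_mul hu (by linarith)] at hmono
      exact hmono
    -- combine
    have total : ∫ r in (0:ℝ)..s', F r
        ≤ 1 / 2 + (1 / 2) * Real.log (s' / δ) + (1 / 2) * Real.log ((s' + u) / u) := by
      calc ∫ r in (0:ℝ)..s', F r ≤ (∫ r in (0:ℝ)..s', g₁ r) + ∫ r in (0:ℝ)..s', g₂ r := by
            rw [← step2]; exact step1
        _ ≤ (1 / 2 + (1 / 2) * Real.log (s' / δ)) + (1 / 2) * Real.log ((s' + u) / u) := by
            rw [step3]; exact add_le_add step4 step5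
        _ = _ := by ring
    -- final arithmetic with logarithms
    have hlogδ : Real.log δ = 2 * Real.log ε - Real.log (4 * π * K₀) := by
      rw [hδ_def, Real.log_div (by positivity) (by positivity), Real.log_pow]
      push_cast
      ring
    have hlogu : Real.log u = 2 * a * Real.log ε + Real.log t := by
      rw [hu_def, Real.log_mul (by positivity) ht.ne', Real.log_rpow hε0]
    have hlog4 : Real.log (4 * π * K₀ * t) = Real.log (4 * π * K₀) + Real.log t :=
      Real.log_mul (by positivity) ht.ne'
    have hlogs' : Real.log s' ≤ Real.log t := Real.log_le_log hs'0 hs't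
    have hlogs'u : Real.log (s' + u) ≤ Real.log t := Real.log_le_log (by linarith) hs'u
    have hd1 : Real.log (s' / δ) = Real.log s' - Real.log δ :=
      Real.log_div hs'0.ne' hδ.ne'
    have hd2 : Real.log ((s' + u) / u) = Real.log (s' + u) - Real.log u :=
      Real.log_div (by linarith) hu.ne'
    rw [hd1, hd2, hlogδ, hlogu] at total
    rw [hlog4, hlog1ε]
    linarith
end

section
/- Let t > 0, K₀ > 0, a ∈ (0, 1], ε ∈ (0, 1) with 4πK₀t ≥ ε², and set u = ε^{2a} t. Then for every integer n ≥ 1, ∫_{0 < s₁ < ⋯ < s_n < t − u} (2s_n + 2u)^{−1} ∏_{i=1}^{n−1} min( 1/(2(s_{i+1} − s_i)) + 1/(2s_i + 2u), 2πK₀/ε² ) ds₁⋯ds_n ≤ ( (1/2) log(4πK₀ t) + 1/2 + (1 + a) log(1/ε) )^{n−1} · a log(1/ε). -/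
open MeasureTheory Real Set

section Stmt12Aux

/-! ### One-dimensional integral lemmas -/

lemma intInt_min {M : ℝ} (hM : 0 < M) {a b : ℝ} (ha : 0 ≤ a) (hab : a ≤ b) :
    IntervalIntegrable (fun x : ℝ => min (2*x)⁻¹ M) volume a b := by
  rw [intervalIntegrable_iff_integrableOn_Ioc_of_le hab]
  apply Integrable.mono' (g := fun _ => M)
    (integrableOn_const measure_Ioc_lt_top.ne)
  · exact ((measurable_const_mul 2).inv.min measurable_const).aestronglyMeasurable
  · filter_upwards [ae_restrict_mem measurableSet_Ioc] with x hx
    rw [Real.norm_eq_abs, abs_le]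
    have hx0 : 0 < x := lt_of_le_of_lt ha hx.1
    constructor
    · have : (0:ℝ) ≤ min (2*x)⁻¹ M := le_min (by positivity) hM.le
      linarith
    · exact min_le_right _ _

lemma integral_min_le {M : ℝ} (hM : 0 < M) {c t' : ℝ} (hc : 0 < c) (hct : c ≤ t')
    (h1 : 1 ≤ 2*M*t') :
    ∫ x in (0:ℝ)..c, min (2*x)⁻¹ M ≤ 1/2 + (1/2) * Real.log (2*M*t') := by
  have hlog : 0 ≤ Real.log (2*M*t') := Real.log_nonneg h1
  set d : ℝ := (2*M)⁻¹ with hd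
  have hd0 : 0 < d := by positivity
  rcases le_or_gt c d with hcd | hdc
  · have h2 : ∫ x in (0:ℝ)..c, min (2*x)⁻¹ M ≤ ∫ x in (0:ℝ)..c, M := by
      apply intervalIntegral.integral_mono_on hc.le (intInt_min hM le_rfl hc.le)
        intervalIntegrable_const
      intro x _; exact min_le_right _ _
    rw [intervalIntegral.integral_const, smul_eq_mul] at h2
    have : (c - 0) * M ≤ 1/2 := by
      rw [sub_zero]
      calc c * M ≤ d * M := by nlinarith
      _ = 1/2 := by rw [hd]; field_simp
    linarith
  · have hsplit : ∫ x in (0:ℝ)..c, min (2*x)⁻¹ M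
        = (∫ x in (0:ℝ)..d, min (2*x)⁻¹ M) + ∫ x in d..c, min (2*x)⁻¹ M := by
      rw [intervalIntegral.integral_add_adjacent_intervals (intInt_min hM le_rfl hd0.le)
        (intInt_min hM hd0.le hdc.le)]
    have h2 : ∫ x in (0:ℝ)..d, min (2*x)⁻¹ M ≤ 1/2 := by
      have := intervalIntegral.integral_mono_on hd0.le (intInt_min hM le_rfl hd0.le)
        intervalIntegrable_const (fun x _ => min_le_right (2*x)⁻¹ M)
      rw [intervalIntegral.integral_const, smul_eq_mul, sub_zero] at this
      calc ∫ x in (0:ℝ)..d, min (2*x)⁻¹ M ≤ d * M := this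
      _ = 1/2 := by rw [hd]; field_simp
    have hcont : IntervalIntegrable (fun x : ℝ => (2*x)⁻¹) volume d c := by
      apply ContinuousOn.intervalIntegrable
      apply ContinuousOn.inv₀ (by fun_prop)
      intro x hx
      rw [Set.uIcc_of_le hdc.le] at hx
      have : 0 < x := lt_of_lt_of_le hd0 hx.1
      positivity
    have h3 : ∫ x in d..c, min (2*x)⁻¹ M ≤ ∫ x in d..c, (2*x)⁻¹ := by
      apply intervalIntegral.integral_mono_on hdc.le (intInt_min hM hd0.le hdc.le) hcont
      intro x _; exact min_le_left _ _
    have h4 : ∫ x in d..c, (2*x)⁻¹ = (1/2) * (Real.log c - Real.log d) := by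
      have h : (fun x : ℝ => (2*x)⁻¹) = fun x : ℝ => (1/2) * x⁻¹ := by
        funext x; rw [mul_inv]; ring
      rw [h, intervalIntegral.integral_const_mul, integral_inv_of_pos hd0 hc,
        Real.log_div (ne_of_gt hc) (ne_of_gt hd0)]
    have h5 : Real.log c - Real.log d ≤ Real.log (2*M*t') := by
      have : Real.log c - Real.log d = Real.log (2*M*c) := by
        rw [show 2*M*c = c / d by rw [hd, div_inv_eq_mul]; ring,
          Real.log_div (ne_of_gt hc) (ne_of_gt hd0)]
      rw [this]
      apply Real.log_le_log (by positivity)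
      nlinarith
    linarith

lemma integrableOn_minfun {u M : ℝ} (hu : 0 < u) (hM : 0 < M) (c : ℝ) :
    IntegrableOn (fun x : ℝ => min (1/(2*(c-x)) + 1/(2*x+2*u)) M) (Ioc 0 c) := by
  apply Integrable.mono' (g := fun _ => M)
    (integrableOn_const measure_Ioc_lt_top.ne)
  · apply Measurable.aestronglyMeasurable
    apply Measurable.min _ measurable_const
    apply Measurable.add
    · exact measurable_const.div ((measurable_const.sub measurable_id).const_mul 2)
    · exact measurable_const.div ((measurable_id.const_mul 2).add_const _)
  · filter_upwards [ae_restrict_mem measurableSet_Ioc] with x hx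
    rw [Real.norm_eq_abs, abs_le]
    have h1 : 0 ≤ 1/(2*(c-x)) := by
      rcases eq_or_lt_of_le hx.2 with h | h
      · simp [← h]
      · have : 0 < c - x := by linarith
        positivity
    have h2 : 0 ≤ 1/(2*x+2*u) := by
      have := hx.1; positivity
    exact ⟨by nlinarith [le_min h1 (le_of_lt hM), le_min (add_nonneg h1 h2) hM.le],
      min_le_right _ _⟩

lemma intInt_minfun {u M : ℝ} (hu : 0 < u) (hM : 0 < M) {c : ℝ} (hc : 0 ≤ c) :
    IntervalIntegrable (fun x : ℝ => min (1/(2*(c-x)) + 1/(2*x+2*u)) M) volume 0 c := by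
  rw [intervalIntegrable_iff_integrableOn_Ioc_of_le hc]
  exact integrableOn_minfun hu hM c

lemma intInt_invlin {u : ℝ} (hu : 0 < u) {c : ℝ} (hc : 0 ≤ c) :
    IntervalIntegrable (fun x : ℝ => 1/(2*x+2*u)) volume 0 c := by
  apply ContinuousOn.intervalIntegrable
  simp_rw [one_div]
  apply ContinuousOn.inv₀ (by fun_prop)
  intro x hx
  rw [Set.uIcc_of_le hc] at hx
  have := hx.1; positivity

lemma intInt_minrefl {M : ℝ} (hM : 0 < M) {c : ℝ} (hc : 0 ≤ c) :
    IntervalIntegrable (fun x : ℝ => min (2*(c-x))⁻¹ M) volume 0 c := by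
  have h := ((intInt_min hM le_rfl hc).comp_sub_left c).symm
  simpa using h

lemma key1D {u M t' : ℝ} (hu : 0 < u) (hM : 0 < M) (ht' : 0 < t')
    (h1 : 1 ≤ 2*M*t') {c : ℝ} (hc : 0 < c) (hcT : c + u ≤ t') :
    ∫ x in (0:ℝ)..c, min (1/(2*(c-x)) + 1/(2*x+2*u)) M
      ≤ 1/2 + (1/2) * Real.log (2*M*t') + (1/2) * (Real.log t' - Real.log u) := by
  have hstep : ∫ x in (0:ℝ)..c, min (1/(2*(c-x)) + 1/(2*x+2*u)) M
      ≤ ∫ x in (0:ℝ)..c, (min (2*(c-x))⁻¹ M + 1/(2*x+2*u)) := by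
    apply intervalIntegral.integral_mono_on hc.le (intInt_minfun hu hM hc.le)
      ((intInt_minrefl hM hc.le).add (intInt_invlin hu hc.le))
    intro x hx
    have hq : 0 ≤ 1/(2*x+2*u) := by have := hx.1; positivity
    rw [one_div]
    rcases le_or_gt ((2*(c-x))⁻¹ + 1/(2*x+2*u)) M with h | h
    · rw [min_eq_left h]
      rcases min_cases ((2*(c-x))⁻¹) M with ⟨he, _⟩ | ⟨he, hlt⟩
      · rw [he]
      · rw [he]; linarith
    · rw [min_eq_right h.le]
      rcases min_cases ((2*(c-x))⁻¹) M with ⟨he, hle⟩ | ⟨he, hlt⟩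
      · rw [he]; linarith
      · rw [he]; linarith
  have hadd : ∫ x in (0:ℝ)..c, (min (2*(c-x))⁻¹ M + 1/(2*x+2*u))
      = (∫ x in (0:ℝ)..c, min (2*(c-x))⁻¹ M) + ∫ x in (0:ℝ)..c, 1/(2*x+2*u) :=
    intervalIntegral.integral_add (intInt_minrefl hM hc.le) (intInt_invlin hu hc.le)
  have hrefl : ∫ x in (0:ℝ)..c, min (2*(c-x))⁻¹ M = ∫ x in (0:ℝ)..c, min (2*x)⁻¹ M := by
    have := intervalIntegral.integral_comp_sub_left (a := (0:ℝ)) (b := c)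
      (fun y : ℝ => min (2*y)⁻¹ M) c
    simpa using this
  have h2 : ∫ x in (0:ℝ)..c, min (2*x)⁻¹ M ≤ 1/2 + (1/2) * Real.log (2*M*t') :=
    integral_min_le hM hc (by linarith) h1
  have h3 : ∫ x in (0:ℝ)..c, 1/(2*x+2*u) ≤ (1/2) * (Real.log t' - Real.log u) := by
    have heq : ∫ x in (0:ℝ)..c, 1/(2*x+2*u) = (1/2) * (Real.log (c+u) - Real.log u) := by
      have h : (fun x : ℝ => 1/(2*x+2*u)) = fun x => (1/2) * (x+u)⁻¹ := by
        funext x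
        rw [one_div, show 2*x+2*u = 2*(x+u) by ring, mul_inv]
        ring
      rw [h, intervalIntegral.integral_const_mul,
        intervalIntegral.integral_comp_add_right (fun y => y⁻¹) u, zero_add,
        integral_inv_of_pos hu (by linarith), Real.log_div (by linarith) (ne_of_gt hu)]
    rw [heq]
    have : Real.log (c+u) ≤ Real.log t' := Real.log_le_log (by linarith) hcT
    linarith
  have h2' := hrefl.trans_le h2
  linarith

lemma integral_inv_lin {u : ℝ} (hu : 0 < u) {T : ℝ} (hT : 0 ≤ T) :
    ∫ x in (0:ℝ)..T, (2*x+2*u)⁻¹ = (1/2) * (Real.log (T+u) - Real.log u) := by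
  have h : (fun x : ℝ => (2*x+2*u)⁻¹) = fun x => (1/2) * (x+u)⁻¹ := by
    funext x
    rw [show 2*x+2*u = 2*(x+u) by ring, mul_inv]
    ring
  rw [h, intervalIntegral.integral_const_mul,
    intervalIntegral.integral_comp_add_right (fun y => y⁻¹) u, zero_add,
    integral_inv_of_pos hu (by linarith), Real.log_div (by linarith) (ne_of_gt hu)]

/-! ### The simplex set and the integrand -/

def Sset (T : ℝ) (n : ℕ) : Set (Fin (n+1) → ℝ) :=
  {σ | StrictMono σ ∧ 0 < σ 0 ∧ σ (Fin.last n) < T}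

noncomputable def ff (u M : ℝ) (n : ℕ) (σ : Fin (n+1) → ℝ) : ℝ :=
  (2 * σ (Fin.last n) + 2 * u)⁻¹ *
    ∏ i : Fin n,
      min (1 / (2 * (σ i.succ - σ i.castSucc)) + 1 / (2 * σ i.castSucc + 2 * u)) M

lemma meas_Sset (T : ℝ) (n : ℕ) : MeasurableSet (Sset T n) := by
  have h : Sset T n = (⋂ i : Fin n, {σ : Fin (n+1) → ℝ | σ i.castSucc < σ i.succ})
      ∩ ((fun σ : Fin (n+1) → ℝ => σ 0) ⁻¹' Ioi 0)
      ∩ ((fun σ : Fin (n+1) → ℝ => σ (Fin.last n)) ⁻¹' Iio T) := by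
    ext σ
    simp [Sset, Fin.strictMono_iff_lt_succ, and_assoc]
  rw [h]
  refine MeasurableSet.inter (MeasurableSet.inter ?_ ?_) ?_
  · exact MeasurableSet.iInter fun i =>
      measurableSet_lt (measurable_pi_apply _) (measurable_pi_apply _)
  · exact (measurable_pi_apply _) measurableSet_Ioi
  · exact (measurable_pi_apply _) measurableSet_Iio

lemma meas_ff (u M : ℝ) (n : ℕ) : Measurable (ff u M n) := by
  apply Measurable.mul
  · exact (((measurable_pi_apply _).const_mul 2).add_const _).inv
  · apply Finset.measurable_prod
    intro i _
    apply Measurable.min _ measurable_const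
    apply Measurable.add
    · exact measurable_const.div
        (((measurable_pi_apply i.succ).sub (measurable_pi_apply i.castSucc)).const_mul 2)
    · exact measurable_const.div (((measurable_pi_apply _).const_mul 2).add_const _)

lemma lint_Ioo {f : ℝ → ℝ} {a b : ℝ} (hab : a ≤ b)
    (hf : IntegrableOn f (Ioo a b)) (h0 : ∀ x ∈ Ioo a b, 0 ≤ f x) :
    ∫⁻ x, (Ioo a b).indicator (fun x => ENNReal.ofReal (f x)) x
      = ENNReal.ofReal (∫ x in a..b, f x) := by
  rw [lintegral_indicator measurableSet_Ioo,
    ← ofReal_integral_eq_lintegral_ofReal hf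
      ((ae_restrict_iff' measurableSet_Ioo).2 (ae_of_all _ h0)),
    intervalIntegral.integral_of_le hab, MeasureTheory.integral_Ioc_eq_integral_Ioo]

lemma strictMono_cons_iff {n : ℕ} {x : ℝ} {τ : Fin (n+1) → ℝ} :
    StrictMono (Fin.cons x τ : Fin (n+2) → ℝ) ↔ x < τ 0 ∧ StrictMono τ := by
  rw [Fin.strictMono_iff_lt_succ, Fin.strictMono_iff_lt_succ, Fin.forall_fin_succ]
  constructor
  · rintro ⟨h0, hs⟩
    refine ⟨by simpa using h0, fun i => ?_⟩
    have := hs i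
    rwa [← Fin.succ_castSucc, Fin.cons_succ, Fin.cons_succ] at this
  · rintro ⟨h0, hs⟩
    refine ⟨by simpa using h0, fun i => ?_⟩
    rw [← Fin.succ_castSucc, Fin.cons_succ, Fin.cons_succ]
    exact hs i

lemma cons_mem_Sset_iff {T : ℝ} {n : ℕ} {x : ℝ} {τ : Fin (n+1) → ℝ} :
    (Fin.cons x τ : Fin (n+2) → ℝ) ∈ Sset T (n+1) ↔ τ ∈ Sset T n ∧ x ∈ Ioo 0 (τ 0) := by
  simp only [Sset, mem_setOf_eq, strictMono_cons_iff, mem_Ioo]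
  rw [Fin.cons_zero, ← Fin.succ_last, Fin.cons_succ]
  constructor
  · rintro ⟨⟨hxτ, hsm⟩, hx0, hlast⟩
    exact ⟨⟨hsm, lt_trans hx0 hxτ, hlast⟩, hx0, hxτ⟩
  · rintro ⟨⟨hsm, _, hlast⟩, hx0, hxτ⟩
    exact ⟨⟨hxτ, hsm⟩, hx0, hlast⟩

lemma ff_cons (u M : ℝ) {n : ℕ} (x : ℝ) (τ : Fin (n+1) → ℝ) :
    ff u M (n+1) (Fin.cons x τ) =
      ff u M n τ * min (1 / (2 * (τ 0 - x)) + 1 / (2 * x + 2 * u)) M := by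
  unfold ff
  rw [← Fin.succ_last, Fin.cons_succ, Fin.prod_univ_succ]
  have h0 : (Fin.cons x τ : Fin (n+2) → ℝ) (Fin.succ 0) = τ 0 := Fin.cons_succ _ _ _
  have h0' : (Fin.cons x τ : Fin (n+2) → ℝ) (Fin.castSucc 0) = x := by
    rw [Fin.castSucc_zero]; exact Fin.cons_zero _ _
  have hrest : ∀ i : Fin n,
      min (1 / (2 * ((Fin.cons x τ : Fin (n+2) → ℝ) i.succ.succ
          - (Fin.cons x τ : Fin (n+2) → ℝ) i.succ.castSucc))
        + 1 / (2 * (Fin.cons x τ : Fin (n+2) → ℝ) i.succ.castSucc + 2 * u)) M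
      = min (1 / (2 * (τ i.succ - τ i.castSucc)) + 1 / (2 * τ i.castSucc + 2 * u)) M := by
    intro i
    rw [← Fin.succ_castSucc, Fin.cons_succ, Fin.cons_succ]
  simp only [h0, h0', hrest]
  ring

lemma ff_nonneg {u M T : ℝ} (hu : 0 < u) (hM : 0 < M) {n : ℕ} {τ : Fin (n+1) → ℝ}
    (hτ : τ ∈ Sset T n) : 0 ≤ ff u M n τ := by
  obtain ⟨hsm, h0, _⟩ := hτ
  apply mul_nonneg
  · have : 0 < τ (Fin.last n) := lt_of_lt_of_le h0 (hsm.monotone (Fin.zero_le _))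
    positivity
  · apply Finset.prod_nonneg
    intro i _
    apply le_min _ hM.le
    have h1 : 0 < τ i.succ - τ i.castSucc := sub_pos.2 (hsm (Fin.castSucc_lt_succ (i := i)))
    have h2 : 0 < τ i.castSucc := lt_of_lt_of_le h0 (hsm.monotone (Fin.zero_le _))
    positivity

lemma inner_step {u M T B : ℝ} (hu : 0 < u) (hM : 0 < M) (hT : 0 < T) (hB : 0 ≤ B)
    (hBc : ∀ c : ℝ, 0 < c → c < T →
      ∫ x in (0:ℝ)..c, min (1/(2*(c-x)) + 1/(2*x+2*u)) M ≤ B)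
    (n : ℕ) (τ : Fin (n+1) → ℝ) :
    ∫⁻ x : ℝ, (Sset T (n+1)).indicator
        (fun σ => ENNReal.ofReal (ff u M (n+1) σ)) (Fin.cons x τ)
      ≤ ENNReal.ofReal B
        * (Sset T n).indicator (fun σ => ENNReal.ofReal (ff u M n σ)) τ := by
  by_cases hτ : τ ∈ Sset T n
  · rw [indicator_of_mem hτ]
    have hτ0 : 0 < τ 0 := hτ.2.1
    have hτ0T : τ 0 < T :=
      lt_of_le_of_lt (hτ.1.monotone (Fin.le_last 0)) hτ.2.2
    have heq : ∀ x : ℝ, (Sset T (n+1)).indicator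
          (fun σ => ENNReal.ofReal (ff u M (n+1) σ)) (Fin.cons x τ)
        = ENNReal.ofReal (ff u M n τ) * (Ioo (0:ℝ) (τ 0)).indicator
            (fun x => ENNReal.ofReal (min (1/(2*(τ 0 - x)) + 1/(2*x+2*u)) M)) x := by
      intro x
      by_cases hx : x ∈ Ioo (0:ℝ) (τ 0)
      · rw [indicator_of_mem hx, indicator_of_mem (cons_mem_Sset_iff.2 ⟨hτ, hx⟩),
          ff_cons, ENNReal.ofReal_mul (ff_nonneg hu hM hτ)]
      · rw [indicator_of_notMem hx,
          indicator_of_notMem (fun hmem => hx (cons_mem_Sset_iff.1 hmem).2), mul_zero]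
    simp_rw [heq]
    rw [lintegral_const_mul' _ _ ENNReal.ofReal_ne_top]
    rw [lint_Ioo hτ0.le ((integrableOn_minfun hu hM (τ 0)).mono_set Ioo_subset_Ioc_self)
      (fun x hx => le_min (by
        have h1 : 0 < τ 0 - x := sub_pos.2 hx.2
        have h2 : 0 < x := hx.1
        positivity) hM.le)]
    rw [mul_comm]
    exact mul_le_mul' (ENNReal.ofReal_le_ofReal (hBc (τ 0) hτ0 hτ0T)) le_rfl
  · rw [indicator_of_notMem hτ, mul_zero]
    have heq : ∀ x : ℝ, (Sset T (n+1)).indicator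
          (fun σ => ENNReal.ofReal (ff u M (n+1) σ)) (Fin.cons x τ) = 0 := fun x =>
      indicator_of_notMem (fun hmem => hτ (cons_mem_Sset_iff.1 hmem).1) _
    simp_rw [heq]
    simp

lemma step_eq (n : ℕ) (g : (Fin (n+2) → ℝ) → ENNReal) (hg : Measurable g) :
    ∫⁻ σ : Fin (n+2) → ℝ, g σ
      = ∫⁻ τ : Fin (n+1) → ℝ, ∫⁻ x : ℝ, g (Fin.cons x τ) := by
  have hmp := (volume_preserving_piFinSuccAbove (fun _ : Fin (n+2) => ℝ) 0).symm
  rw [← hmp.lintegral_comp_emb (MeasurableEquiv.measurableEmbedding _) g]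
  have heq : ∀ p : ℝ × (Fin (n+1) → ℝ),
      g ((MeasurableEquiv.piFinSuccAbove (fun _ : Fin (n+2) => ℝ) 0).symm p)
        = g (Fin.cons p.1 p.2) := by
    intro p
    congr 1
    simp [MeasurableEquiv.piFinSuccAbove_symm_apply, Fin.insertNthEquiv,
      Fin.insertNth_zero']
  simp_rw [heq]
  rw [Measure.volume_eq_prod, lintegral_prod_symm]
  exact (hg.comp (measurable_pi_iff.2 fun i => by
    exact Fin.cases (by simpa using measurable_fst) (fun j => by
      simpa using measurable_snd.eval) i)).aemeasurable

lemma main_bound {u M T B L : ℝ} (hu : 0 < u) (hM : 0 < M) (hT : 0 < T)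
    (hB : 0 ≤ B) (hL : 0 ≤ L)
    (hBc : ∀ c : ℝ, 0 < c → c < T →
      ∫ x in (0:ℝ)..c, min (1/(2*(c-x)) + 1/(2*x+2*u)) M ≤ B)
    (hLT : ∫ x in (0:ℝ)..T, (2*x+2*u)⁻¹ ≤ L) :
    ∀ n : ℕ, ∫⁻ σ : Fin (n+1) → ℝ,
        (Sset T n).indicator (fun σ => ENNReal.ofReal (ff u M n σ)) σ
      ≤ ENNReal.ofReal B ^ n * ENNReal.ofReal L := by
  intro n
  induction n with
  | zero =>
    rw [pow_zero, one_mul]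
    have hmp := volume_preserving_funUnique (Fin 1) ℝ
    have heq : ∀ σ : Fin 1 → ℝ,
        (Sset T 0).indicator (fun σ => ENNReal.ofReal (ff u M 0 σ)) σ
          = (Ioo (0:ℝ) T).indicator (fun x => ENNReal.ofReal ((2*x+2*u)⁻¹))
              ((MeasurableEquiv.funUnique (Fin 1) ℝ) σ) := by
      intro σ
      have hσmem : σ ∈ Sset T 0 ↔ σ 0 ∈ Ioo (0:ℝ) T := by
        simp only [Sset, mem_setOf_eq, mem_Ioo]
        exact ⟨fun h => ⟨h.2.1, h.2.2⟩, fun h => ⟨Subsingleton.strictMono σ, h.1, h.2⟩⟩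
      have hval : (MeasurableEquiv.funUnique (Fin 1) ℝ) σ = σ 0 := rfl
      rw [hval]
      by_cases h : σ 0 ∈ Ioo (0:ℝ) T
      · rw [indicator_of_mem h, indicator_of_mem (hσmem.2 h)]
        simp [ff]
      · rw [indicator_of_notMem h, indicator_of_notMem (fun hm => h (hσmem.1 hm))]
    simp_rw [heq]
    refine (hmp.lintegral_comp_emb (MeasurableEquiv.measurableEmbedding _) _).trans_le ?_
    have hint : IntegrableOn (fun x : ℝ => (2*x+2*u)⁻¹) (Ioo 0 T) := by
      have h1 := (intervalIntegrable_iff_integrableOn_Ioc_of_le hT.le).1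
        (intInt_invlin hu hT.le)
      have h2 : (fun x : ℝ => (2*x+2*u)⁻¹) = fun x : ℝ => 1/(2*x+2*u) := by
        funext x; rw [one_div]
      rw [h2]
      exact h1.mono_set Ioo_subset_Ioc_self
    rw [lint_Ioo hT.le hint (fun x hx => by
      have := hx.1; positivity)]
    exact ENNReal.ofReal_le_ofReal hLT
  | succ n ih =>
    rw [step_eq n (fun σ => (Sset T (n+1)).indicator
        (fun σ => ENNReal.ofReal (ff u M (n+1) σ)) σ)
      (((ENNReal.measurable_ofReal.comp (meas_ff u M (n+1))).indicator
        (meas_Sset T (n+1))).comp measurable_id)]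
    calc ∫⁻ τ : Fin (n+1) → ℝ, ∫⁻ x : ℝ, (Sset T (n+1)).indicator
          (fun σ => ENNReal.ofReal (ff u M (n+1) σ)) (Fin.cons x τ)
        ≤ ∫⁻ τ : Fin (n+1) → ℝ, ENNReal.ofReal B
            * (Sset T n).indicator (fun σ => ENNReal.ofReal (ff u M n σ)) τ :=
          lintegral_mono (fun τ => inner_step hu hM hT hB hBc n τ)
      _ = ENNReal.ofReal B * ∫⁻ τ : Fin (n+1) → ℝ,
            (Sset T n).indicator (fun σ => ENNReal.ofReal (ff u M n σ)) τ :=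
          lintegral_const_mul' _ _ ENNReal.ofReal_ne_top
      _ ≤ ENNReal.ofReal B * (ENNReal.ofReal B ^ n * ENNReal.ofReal L) :=
          mul_le_mul' le_rfl ih
      _ = ENNReal.ofReal B ^ (n+1) * ENNReal.ofReal L := by
          rw [pow_succ]; ring

end Stmt12Aux

/-- The `n`-fold temporal simplex bound in the conditional-variance estimate
(stated with `n+1` variables so that the number of variables is an arbitrary
integer `≥ 1`; accordingly the exponent on the right-hand side is `n`,
the paper's `n − 1`).  Here `u = ε^{2a} t`. -/
theorem stmt12 (t K₀ a ε : ℝ) (ht : 0 < t) (hK : 0 < K₀)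
    (ha : 0 < a) (ha1 : a ≤ 1) (hε0 : 0 < ε) (hε1 : ε < 1)
    (hKt : ε ^ 2 ≤ 4 * π * K₀ * t) (n : ℕ) :
    (∫ σ : Fin (n+1) → ℝ,
      Set.indicator
        {σ : Fin (n+1) → ℝ | StrictMono σ ∧ 0 < σ 0 ∧ σ (Fin.last n) < t - ε ^ (2 * a) * t}
        (fun σ => (2 * σ (Fin.last n) + 2 * (ε ^ (2 * a) * t))⁻¹ *
          ∏ i : Fin n,
            min (1 / (2 * (σ i.succ - σ i.castSucc)) + 1 / (2 * σ i.castSucc + 2 * (ε ^ (2 * a) * t)))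
              (2 * π * K₀ / ε ^ 2)) σ)
    ≤ ((1/2) * Real.log (4 * π * K₀ * t) + 1/2 + (1 + a) * Real.log (1/ε)) ^ n
        * (a * Real.log (1/ε)) := by
  suffices h : ∫ σ : Fin (n+1) → ℝ,
      (Sset (t - ε ^ (2*a) * t) n).indicator
        (fun σ => ff (ε ^ (2*a) * t) (2*π*K₀/ε^2) n σ) σ
      ≤ ((1/2) * Real.log (4*π*K₀*t) + 1/2 + (1+a) * Real.log (1/ε)) ^ n
        * (a * Real.log (1/ε)) by
    exact h
  set u : ℝ := ε ^ (2*a) * t with hu_def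
  set M : ℝ := 2*π*K₀/ε^2 with hM_def
  set T : ℝ := t - u with hT_def
  set B : ℝ := (1/2) * Real.log (4*π*K₀*t) + 1/2 + (1+a) * Real.log (1/ε) with hB_def
  set L : ℝ := a * Real.log (1/ε) with hL_def
  have hπ := Real.pi_pos
  have hεa1 : ε ^ (2*a) < 1 := Real.rpow_lt_one hε0.le hε1 (by positivity)
  have hu : 0 < u := by
    have : (0:ℝ) < ε ^ (2*a) := Real.rpow_pos_of_pos hε0 _
    positivity
  have hM : 0 < M := by rw [hM_def]; positivity
  have hT : 0 < T := by
    rw [hT_def, hu_def]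
    nlinarith
  have hlogε : Real.log ε < 0 := Real.log_neg hε0 hε1
  have hlog1ε : Real.log (1/ε) = -Real.log ε := by rw [one_div, Real.log_inv]
  have h4pos : (0:ℝ) < 4*π*K₀*t := by positivity
  have hKtlog : 2 * Real.log ε ≤ Real.log (4*π*K₀*t) := by
    have h := Real.log_le_log (by positivity : (0:ℝ) < ε ^ 2) hKt
    rwa [Real.log_pow, Nat.cast_ofNat] at h
  have hB : 0 ≤ B := by
    rw [hB_def, hlog1ε]
    nlinarith [mul_nonneg ha.le (neg_nonneg.2 hlogε.le)]
  have hL : 0 ≤ L := by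
    rw [hL_def, hlog1ε]
    exact mul_nonneg ha.le (by linarith)
  have hlogu : Real.log u = 2*a*Real.log ε + Real.log t := by
    rw [hu_def, Real.log_mul (ne_of_gt (Real.rpow_pos_of_pos hε0 _)) (ne_of_gt ht),
      Real.log_rpow hε0]
  have h2Mt : 2*M*t = (4*π*K₀*t)/ε^2 := by rw [hM_def]; ring
  have h1 : 1 ≤ 2*M*t := by
    rw [h2Mt]
    exact (one_le_div (by positivity)).2 hKt
  have hlog2Mt : Real.log (2*M*t) = Real.log (4*π*K₀*t) - 2*Real.log ε := by
    rw [h2Mt, Real.log_div (ne_of_gt h4pos) (by positivity)]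
    rw [Real.log_pow, Nat.cast_ofNat]
  have hBc : ∀ c : ℝ, 0 < c → c < T →
      ∫ x in (0:ℝ)..c, min (1/(2*(c-x)) + 1/(2*x+2*u)) M ≤ B := by
    intro c hc hcT
    have hcu : c + u ≤ t := by
      rw [hT_def] at hcT; linarith
    refine le_trans (key1D hu hM ht h1 hc hcu) ?_
    rw [hB_def, hlog2Mt, hlogu, hlog1ε]
    linarith
  have hLT : ∫ x in (0:ℝ)..T, (2*x+2*u)⁻¹ ≤ L := by
    rw [integral_inv_lin hu hT.le, show T + u = t by rw [hT_def]; ring,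
      hlogu, hL_def, hlog1ε]
    linarith
  have key := main_bound hu hM hT hB hL hBc hLT n
  have hpos : ∀ σ : Fin (n+1) → ℝ,
      0 ≤ (Sset T n).indicator (fun σ => ff u M n σ) σ :=
    fun σ => indicator_nonneg (fun σ hσ => ff_nonneg hu hM hσ) σ
  by_cases hInt : Integrable ((Sset T n).indicator (fun σ => ff u M n σ))
      (volume : Measure (Fin (n+1) → ℝ))
  · rw [MeasureTheory.integral_eq_lintegral_of_nonneg_ae (ae_of_all _ hpos)
      hInt.aestronglyMeasurable]
    apply ENNReal.toReal_le_of_le_ofReal (mul_nonneg (pow_nonneg hB n) hL)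
    have heq : ∀ σ : Fin (n+1) → ℝ,
        ENNReal.ofReal ((Sset T n).indicator (fun σ => ff u M n σ) σ)
          = (Sset T n).indicator (fun σ => ENNReal.ofReal (ff u M n σ)) σ := by
      intro σ
      by_cases h : σ ∈ Sset T n
      · rw [indicator_of_mem h, indicator_of_mem h]
      · rw [indicator_of_notMem h, indicator_of_notMem h, ENNReal.ofReal_zero]
    simp_rw [heq]
    refine le_trans key ?_
    rw [ENNReal.ofReal_mul (pow_nonneg hB n), ENNReal.ofReal_pow hB]
  · rw [integral_undef hInt]
    exact mul_nonneg (pow_nonneg hB n) hL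
end
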